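/- Let n ≥ 3, let W be the Coxeter group of type H_{n-1}, let w ∈ W_c be fully commutative, and let {s, t} = {s_1, s_2}. Suppose w admits a reduced factorization w = w_1 · s · w_2 · t · w_3 · s · w_4 · t · w_5, and that moreover both w = w_1 · w_2 · s t s · w_3 · w_4 · t · w_5 and w = w_1 · s · w_2 · w_3 · t s t · w_4 · w_5 are reduced factorizations of w. Then w = w_1 · w_2 · w_3 · s t s t · w_4 · w_5 is a reduced factorization of w, i.e., w has a reduced expression in which all four displayed occurrences of s and t occur consecutively. -/

import Mathlib

open CoxeterSystem List LaurentPolynomial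

noncomputable section

/-! ### Coxeter systems of types `H` and `B` -/

/-- Symmetric bond function: index `i` corresponds to the generator `s_{i+1}`; the bond
between indices `0`,`1` (i.e. `s₁`,`s₂`) equals `c`, consecutive indices otherwise have
bond `3`, and all other pairs commute. -/
def genM (c i j : ℕ) : ℕ :=
  if i = j then 1
  else if i + 1 = j ∨ j + 1 = i then (if i = 0 ∨ j = 0 then c else 3)
  else 2

lemma genM_symm (c i j : ℕ) : genM c i j = genM c j i := by
  unfold genM; split_ifs <;> omega

lemma genM_diag (c i : ℕ) : genM c i i = 1 := by unfold genM; simp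

lemma genM_ne_one (c i j : ℕ) (hc : 3 ≤ c) (h : i ≠ j) : genM c i j ≠ 1 := by
  unfold genM; split_ifs <;> omega

/-- The Coxeter matrix on `k` generators, with first bond `c` (type `H` for `c = 5`,
type `B` for `c = 4`). -/
def Cmat (c k : ℕ) (hc : 3 ≤ c) : CoxeterMatrix (Fin k) where
  M := Matrix.of fun i j => genM c i j
  isSymm := by ext i j; exact genM_symm c j i
  diagonal := fun i => genM_diag c i
  off_diagonal := fun i j h => genM_ne_one c i j hc (fun hh => h (Fin.ext hh))

/-- The Coxeter matrix of type `H_k`. -/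
abbrev Hmat (k : ℕ) : CoxeterMatrix (Fin k) := Cmat 5 k (by norm_num)

/-- The Coxeter matrix of type `B_k`. -/
abbrev Bmat (k : ℕ) : CoxeterMatrix (Fin k) := Cmat 4 k (by norm_num)

/-- `w` is fully commutative: it has no reduced factorization `w = x₁ ⬝ w_{st} ⬝ x₂`,
where `w_{st}` is the longest element of a rank-2 parabolic subgroup `⟨s,t⟩` with
`m(s,t) ≥ 3`. -/
def FC {B : Type*} {W : Type*} [Group W] {M : CoxeterMatrix B} (cs : CoxeterSystem M W)
    (w : W) : Prop :=
  ¬ ∃ (x₁ x₂ : W) (i j : B), 3 ≤ M i j ∧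
      w = x₁ * cs.wordProd (alternatingWord i j (M i j)) * x₂ ∧
      cs.length w = cs.length x₁ + cs.length (cs.wordProd (alternatingWord i j (M i j)))
        + cs.length x₂

/-- Bruhat–Chevalley order: some reduced expression for `w` contains a subword which is a
reduced expression for `x`. -/
def BruhatLE {B : Type*} {W : Type*} [Group W] {M : CoxeterMatrix B}
    (cs : CoxeterSystem M W) (x w : W) : Prop :=
  ∃ ω ω' : List B, cs.IsReduced ω ∧ cs.wordProd ω = w ∧
    ω'.Sublist ω ∧ cs.IsReduced ω' ∧ cs.wordProd ω' = x

/-! ### Commutations acting on occurrences of letters -/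

variable {B : Type*}

/-- One commutation move: swap the letters in positions `k` and `k+1`, which must commute. -/
def SwapStep (M : CoxeterMatrix B) (ω ω' : List B) (k : ℕ) : Prop :=
  ∃ a b : B, ω[k]? = some a ∧ ω[k+1]? = some b ∧ M a b = 2 ∧
    ω' = (ω.set k b).set (k+1) a

/-- Effect of the swap at position `k` on a tracked position. -/
def swapAt (k p : ℕ) : ℕ := if p = k then k + 1 else if p = k + 1 then k else p

/-- A sequence of commutation moves, together with the induced map on positions
(tracking occurrences of letters). -/
inductive CommPath (M : CoxeterMatrix B) : List B → List B → (ℕ → ℕ) → Prop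
  | refl (ω : List B) : CommPath M ω ω id
  | step {ω ω' ω'' : List B} {f : ℕ → ℕ} {k : ℕ} :
      CommPath M ω ω' f → SwapStep M ω' ω'' k → CommPath M ω ω'' (swapAt k ∘ f)

/-- The occurrence at position `p` of `ω` is internal: after commutations it is the middle
term of a consecutive subsequence `s_q s_p s_q` with `m(s_p, s_q) ≥ 3`. -/
def Internal (M : CoxeterMatrix B) (ω : List B) (p : ℕ) : Prop :=
  ∃ (ω' : List B) (f : ℕ → ℕ) (a q : B), CommPath M ω ω' f ∧ 1 ≤ f p ∧
    ω'[f p]? = some a ∧ ω'[f p - 1]? = some q ∧ ω'[f p + 1]? = some q ∧ 3 ≤ M a q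

/-- The occurrence at position `p` of `ω` is lateral with respect to the internal
occurrence at position `r`. -/
def LateralWrt (M : CoxeterMatrix B) (ω : List B) (p r : ℕ) : Prop :=
  ¬ Internal M ω p ∧ Internal M ω r ∧
    ∃ (ω' : List B) (f : ℕ → ℕ) (a q : B), CommPath M ω ω' f ∧
      (f p + 1 = f r ∨ f p = f r + 1) ∧ 1 ≤ f r ∧
      ω'[f r]? = some q ∧ ω'[f r - 1]? = some a ∧ ω'[f r + 1]? = some a ∧
      ω'[f p]? = some a ∧ 3 ≤ M a q

/-- Lateral occurrence. -/
def Lateral (M : CoxeterMatrix B) (ω : List B) (p : ℕ) : Prop := ∃ r, LateralWrt M ω p r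

/-- Bilateral occurrence: lateral with respect to two different internal occurrences. -/
def Bilateral (M : CoxeterMatrix B) (ω : List B) (p : ℕ) : Prop :=
  ∃ r₁ r₂, r₁ ≠ r₂ ∧ LateralWrt M ω p r₁ ∧ LateralWrt M ω p r₂

/-- The occurrence at position `p` is internal and lies in the set `R`: after commutations
it occurs in a subsequence `t s t` whose rightmost occurrence of `t` is bilateral. -/
def InRSet (M : CoxeterMatrix B) (ω : List B) (p : ℕ) : Prop :=
  Internal M ω p ∧
    ∃ (ω' : List B) (f : ℕ → ℕ) (r : ℕ) (a q : B), CommPath M ω ω' f ∧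
      f r = f p + 1 ∧ 1 ≤ f p ∧
      ω'[f p]? = some q ∧ ω'[f p - 1]? = some a ∧ ω'[f p + 1]? = some a ∧ 3 ≤ M q a ∧
      Bilateral M ω r

/-- A word is right justified if every occurrence in `R` has the letter immediately to its
left lateral or internal, and every internal occurrence not in `R` has the letters
immediately to its left and right lateral or internal. -/
def RightJustified (M : CoxeterMatrix B) (ω : List B) : Prop :=
  ∀ p : ℕ,
    (InRSet M ω p → 1 ≤ p ∧ (Lateral M ω (p-1) ∨ Internal M ω (p-1))) ∧
    (Internal M ω p → ¬ InRSet M ω p →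
      1 ≤ p ∧ p + 1 < ω.length ∧ (Lateral M ω (p-1) ∨ Internal M ω (p-1)) ∧
      (Lateral M ω (p+1) ∨ Internal M ω (p+1)))

/-- A bad occurrence of `s₂` (Remark 3.1.11): a lateral occurrence which after commutations
appears as the overscored letter in `s₃ s₁ s₂ s₁ s̄₂ s₃` or `s₃ s̄₂ s₁ s₂ s₁ s₃`. -/
def BadOcc (M : CoxeterMatrix B) (s1 s2 : B) (ω : List B) (p : ℕ) : Prop :=
  Lateral M ω p ∧
    ∃ (ω' : List B) (f : ℕ → ℕ) (s3 : B) (u v : List B), CommPath M ω ω' f ∧ M s2 s3 = 3 ∧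
      ((ω' = u ++ [s3, s1, s2, s1, s2, s3] ++ v ∧ f p = u.length + 4) ∨
       (ω' = u ++ [s3, s2, s1, s2, s1, s3] ++ v ∧ f p = u.length + 1))

/-! ### Blocks for the canonical decomposition of Lemma 3.2.5 -/

/-- Blocks: a plain generator, or one of the six forms of maximal contiguous subsequences
of internal and lateral letters. -/
inductive Blk (B : Type*) where
  | gen (i : B)
  | f1 | f2 | f3 | f4 | f5 | f6

namespace Blk

/-- The underlying word of a block (`s1`, `s2` are the first two Coxeter generators). -/
def word (s1 s2 : B) : Blk B → List B
  | .gen i => [i]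
  | .f1 => [s1, s2]
  | .f2 => [s1, s2, s1]
  | .f3 => [s2, s1, s2]
  | .f4 => [s1, s2, s1, s2]
  | .f5 => [s2, s1, s2]
  | .f6 => [s2, s1, s2, s1]

/-- The positions within each block that are internal. -/
def internalPos : Blk B → List ℕ
  | .gen _ => []
  | .f1 => [1]
  | .f2 => [1]
  | .f3 => [1]
  | .f4 => [1, 2]
  | .f5 => [1, 2]
  | .f6 => [1, 2]

def isGen : Blk B → Prop
  | .gen _ => True
  | _ => False

/-- Blocks allowed in type `B`: only the forms (1), (2), (3). -/
def isBForm : Blk B → Prop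
  | .gen _ => True
  | .f1 => True
  | .f2 => True
  | .f3 => True
  | _ => False

/-- The element of the Temperley–Lieb algebra associated to a block (Definition 3.2.6). -/
def elt {R : Type*} [Ring R] (b1 b2 : R) (g : B → R) : Blk B → R
  | .gen i => g i
  | .f1 => b1 * b2 - 1
  | .f2 => b1 * b2 * b1 - b1
  | .f3 => b2 * b1 * b2 - b2
  | .f4 => b1 * b2 * b1 * b2 - 2 * (b1 * b2)
  | .f5 => b2 * b1 * b2 - 2 * b2
  | .f6 => b2 * b1 * b2 * b1 - 2 * (b2 * b1)

end Blk

/-- The word spelled by a list of blocks. -/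
def blocksWord (s1 s2 : B) (bl : List (Blk B)) : List B :=
  (bl.map (Blk.word s1 s2)).flatten

/-- `bl` is a decomposition of `w ∈ W_c` as in Lemma 3.2.5: the word spelled by the blocks
is a reduced expression for `w` (right justified when `rj = true`), all blocks satisfy `ok`,
the form blocks are maximal (no two adjacent), the occurrences in generator blocks are
neither internal nor lateral, and within the form blocks the internal occurrences are
exactly the designated ones and all others are lateral. -/
def IsDecomp {W : Type*} [Group W] {M : CoxeterMatrix B} (cs : CoxeterSystem M W)
    (s1 s2 : B) (rj : Bool) (ok : Blk B → Prop) (w : W) (bl : List (Blk B)) : Prop :=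
  cs.IsReduced (blocksWord s1 s2 bl) ∧ cs.wordProd (blocksWord s1 s2 bl) = w ∧
  (rj = true → RightJustified M (blocksWord s1 s2 bl)) ∧
  (∀ b ∈ bl, ok b) ∧
  (∀ (j : ℕ) (b b' : Blk B), bl[j]? = some b → bl[j+1]? = some b' → b.isGen ∨ b'.isGen) ∧
  (∀ (j : ℕ) (b : Blk B) (t : ℕ), bl[j]? = some b → t < (Blk.word s1 s2 b).length →
    (Internal M (blocksWord s1 s2 bl) ((blocksWord s1 s2 (bl.take j)).length + t)
        ↔ t ∈ b.internalPos) ∧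
    (Lateral M (blocksWord s1 s2 bl) ((blocksWord s1 s2 (bl.take j)).length + t)
        ↔ (¬ b.isGen ∧ t ∉ b.internalPos)))

/-! ### The generalized Temperley–Lieb algebras -/

/-- The ground ring `A = ℤ[v,v⁻¹]`. -/
abbrev LA : Type := LaurentPolynomial ℤ

/-- `v`. -/
def vv : LA := T 1

/-- `v⁻¹`. -/
def vinv : LA := T (-1)

/-- `δ = v + v⁻¹`. -/
def δδ : LA := vv + vinv

/-- A Laurent polynomial lies in `ℕ[v, v⁻¹]`, i.e. has non-negative coefficients. -/
def IsNonnegLP (p : LA) : Prop := ∀ z : ℤ, 0 ≤ p.coeff z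

/-- Defining relations for the generalized Temperley–Lieb algebra; `c = 5` gives type `H`
and `c = 4` gives type `B`.  Generator index `i` corresponds to `b_{i+1}`. -/
inductive TLrel (c k : ℕ) : FreeAlgebra LA (Fin k) → FreeAlgebra LA (Fin k) → Prop
  | sq (i : Fin k) : TLrel c k (.ι LA i * .ι LA i) (δδ • .ι LA i)
  | comm (i j : Fin k) (h : (i:ℕ) + 1 < j ∨ (j:ℕ) + 1 < i) :
      TLrel c k (.ι LA i * .ι LA j) (.ι LA j * .ι LA i)
  | braid (i j : Fin k) (h : (i:ℕ) + 1 = j ∨ (j:ℕ) + 1 = i) (hi : 1 ≤ (i:ℕ)) (hj : 1 ≤ (j:ℕ)) :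
      TLrel c k (.ι LA i * .ι LA j * .ι LA i) (.ι LA i)
  | hrel (i j : Fin k) (h : ((i:ℕ) = 0 ∧ (j:ℕ) = 1) ∨ ((i:ℕ) = 1 ∧ (j:ℕ) = 0)) (hc : c = 5) :
      TLrel c k (.ι LA i * .ι LA j * .ι LA i * .ι LA j * .ι LA i)
        ((3 : LA) • (.ι LA i * .ι LA j * .ι LA i) - .ι LA i)
  | brel (i j : Fin k) (h : ((i:ℕ) = 0 ∧ (j:ℕ) = 1) ∨ ((i:ℕ) = 1 ∧ (j:ℕ) = 0)) (hc : c = 4) :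
      TLrel c k (.ι LA i * .ι LA j * .ι LA i * .ι LA j) ((2 : LA) • (.ι LA i * .ι LA j))

/-- The generalized Temperley–Lieb algebra (type `H` for `c = 5`, type `B` for `c = 4`). -/
abbrev TL (c k : ℕ) : Type := RingQuot (TLrel c k)

/-- The generator `b_{i+1}` of `TL c k`. -/
def bgen (c k : ℕ) (i : Fin k) : TL c k := RingQuot.mkAlgHom LA _ (FreeAlgebra.ι LA i)

/-- The monomial `b_{i_1} ⋯ b_{i_l}` attached to a word. -/
def bword (c k : ℕ) (ω : List (Fin k)) : TL c k := (ω.map (bgen c k)).prod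

/-- The element `t̃ONE = (b_{i_1} - v⁻¹) ⋯ (b_{i_l} - v⁻¹)` attached to a word. -/
def tword (c k : ℕ) (ω : List (Fin k)) : TL c k :=
  (ω.map (fun i => bgen c k i - algebraMap LA (TL c k) vinv)).prod

/-- The product of the Temperley–Lieb elements of a list of blocks (giving `f_w` when the
blocks form a decomposition of `w` as in Lemma 3.2.5). -/
def blocksElt (c k : ℕ) (bl : List (Blk (Fin k))) (h1 h2 : Fin k) : TL c k :=
  (bl.map (Blk.elt (bgen c k h1) (bgen c k h2) (bgen c k))).prod

/-- `r` assigns to every element satisfying `P` (e.g. every fully commutative element)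
a reduced expression. -/
def IsRedChoice {W : Type*} [Group W] {M : CoxeterMatrix B} (cs : CoxeterSystem M W)
    (P : W → Prop) (r : W → List B) : Prop :=
  ∀ w : W, P w → cs.IsReduced (r w) ∧ cs.wordProd (r w) = w

/-- The `ℤ[v⁻¹]`-lattice spanned by the elements `gen (r w)`, for `w` satisfying `P`;
realized as the `ℤ`-span of all the `v⁻ʲ`-multiples of these elements. -/
def Latt {W : Type*} (c k : ℕ) (P : W → Prop) (r : W → List (Fin k))
    (gen : List (Fin k) → TL c k) : Submodule ℤ (TL c k) :=
  Submodule.span ℤ {x : TL c k | ∃ (j : ℕ) (w : W), P w ∧ x = (T (-(j:ℤ)) : LA) • gen (r w)}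

/-- `bar` is a bar involution: a ring homomorphism fixing each generator `b_i` and acting
on scalars by `v ↦ v⁻¹`. -/
def IsBar (c k : ℕ) (bar : TL c k →+* TL c k) : Prop :=
  (∀ i : Fin k, bar (bgen c k i) = bgen c k i) ∧
  (∀ m : ℤ, bar (algebraMap LA (TL c k) (T m)) = algebraMap LA (TL c k) (T (-m)))

section CoxDevel

/-! Layer 1 : geometric representation -/

lemma Hmat_apply {k : ℕ} (i j : Fin k) : (Hmat k) i j = genM 5 i j := rfl

lemma genM_cases {k : ℕ} (i j : Fin k) (h : i ≠ j) :
    genM 5 i j = 2 ∨ genM 5 i j = 3 ∨ genM 5 i j = 5 := by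
  have : (i : ℕ) ≠ (j : ℕ) := fun hh => h (Fin.ext hh)
  unfold genM; split_ifs <;> omega

/-- the golden ratio -/
def phR : ℝ := (1 + Real.sqrt 5) / 2

lemma phR_sq : phR ^ 2 = phR + 1 := by
  have h5 : Real.sqrt 5 ^ 2 = 5 := Real.sq_sqrt (by norm_num)
  unfold phR; nlinarith [h5]

lemma phR_pos : 0 < phR := by
  have := Real.sqrt_nonneg 5
  unfold phR; linarith

/-- form coefficients -/
def cf (m : ℕ) : ℝ :=
  if m = 1 then 1 else if m = 3 then -(1/2) else if m = 5 then -(phR/2) else 0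

def CfM (k : ℕ) (i j : Fin k) : ℝ := cf (genM 5 i j)

lemma CfM_symm (k : ℕ) (i j : Fin k) : CfM k i j = CfM k j i := by
  unfold CfM; rw [genM_symm]

lemma CfM_diag (k : ℕ) (i : Fin k) : CfM k i i = 1 := by
  unfold CfM; rw [genM_diag]; rfl

variable {k : ℕ}

/-- coordinate vector -/
def eV (i : Fin k) : Fin k → ℝ := Pi.single i 1

def Kmap (i : Fin k) : (Fin k → ℝ) →ₗ[ℝ] ℝ :=
  ∑ j, CfM k i j • (LinearMap.proj j)

lemma Kmap_apply (i : Fin k) (v : Fin k → ℝ) :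
    Kmap i v = ∑ j, CfM k i j * v j := by
  simp [Kmap]

lemma Kmap_eV (i j : Fin k) : Kmap i (eV j) = CfM k i j := by
  rw [Kmap_apply]
  rw [Finset.sum_eq_single j]
  · simp [eV]
  · intro b _ hb
    simp [eV, Pi.single_apply, hb]
  · simp

def sig (i : Fin k) : Module.End ℝ (Fin k → ℝ) :=
  LinearMap.id - (Kmap i).smulRight (2 • eV i)

lemma sig_apply (i : Fin k) (v : Fin k → ℝ) :
    sig i v = v - (2 * Kmap i v) • eV i := by
  simp [sig, two_smul, smul_smul]
  module


lemma sig_step (i j : Fin k) (g A B : ℝ) (hg : CfM k i j = -(g/2))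
    (v : Fin k → ℝ) :
    sig i (v + A • eV i + B • eV j)
      = v + (-A + g * B - 2 * Kmap i v) • eV i + B • eV j := by
  rw [sig_apply]
  have hK : Kmap i (v + A • eV i + B • eV j) = Kmap i v + A - g/2 * B := by
    simp [map_add, map_smul, Kmap_eV, CfM_diag, hg]; ring
  rw [hK]
  module

lemma sig_step' (i j : Fin k) (g A B : ℝ) (hg : CfM k i j = -(g/2))
    (v : Fin k → ℝ) :
    sig j (v + A • eV i + B • eV j)
      = v + A • eV i + (-B + g * A - 2 * Kmap j v) • eV j := by
  rw [sig_apply]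
  have hg' : CfM k j i = -(g/2) := by rw [CfM_symm]; exact hg
  have hK : Kmap j (v + A • eV i + B • eV j) = Kmap j v + B - g/2 * A := by
    simp [map_add, map_smul, Kmap_eV, CfM_diag, hg']; ring
  rw [hK]
  module
lemma sig_invol (i : Fin k) : sig i * sig i = 1 := by
  apply LinearMap.ext; intro v
  have h1 : Kmap i (sig i v) = - Kmap i v := by
    rw [sig_apply]; simp [map_sub, map_smul, Kmap_eV, CfM_diag]; ring
  show sig i (sig i v) = v
  rw [sig_apply (v := sig i v), h1, sig_apply]
  module

lemma braid2 (i j : Fin k) (hg : CfM k i j = -((0:ℝ)/2)) :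
    (sig i * sig j) ^ 2 = 1 := by
  apply LinearMap.ext; intro v
  simp only [Module.End.one_apply, pow_succ, pow_zero, one_mul, Module.End.mul_apply]
  have h0 : v = v + (0:ℝ) • eV i + (0:ℝ) • eV j := by module
  have h1 : sig j (v + (0:ℝ) • eV i + (0:ℝ) • eV j) = v + (0:ℝ) • eV i + (-(2 * Kmap j v)) • eV j := by
    rw [sig_step' i j 0 _ _ hg]
    have hc : (-((0:ℝ)) + 0 * ((0:ℝ)) - 2 * Kmap j v) = (-(2 * Kmap j v)) := by ring
    rw [hc]
  have h2 : sig i (v + (0:ℝ) • eV i + (-(2 * Kmap j v)) • eV j) = v + (-(2 * Kmap i v)) • eV i + (-(2 * Kmap j v)) • eV j := by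
    rw [sig_step i j 0 _ _ hg]
    have hc : (-((0:ℝ)) + 0 * ((-(2 * Kmap j v))) - 2 * Kmap i v) = (-(2 * Kmap i v)) := by ring
    rw [hc]
  have h3 : sig j (v + (-(2 * Kmap i v)) • eV i + (-(2 * Kmap j v)) • eV j) = v + (-(2 * Kmap i v)) • eV i + (0:ℝ) • eV j := by
    rw [sig_step' i j 0 _ _ hg]
    have hc : (-((-(2 * Kmap j v))) + 0 * ((-(2 * Kmap i v))) - 2 * Kmap j v) = (0:ℝ) := by ring
    rw [hc]
  have h4 : sig i (v + (-(2 * Kmap i v)) • eV i + (0:ℝ) • eV j) = v + (0:ℝ) • eV i + (0:ℝ) • eV j := by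
    rw [sig_step i j 0 _ _ hg]
    have hc : (-((-(2 * Kmap i v))) + 0 * ((0:ℝ)) - 2 * Kmap i v) = (0:ℝ) := by ring
    rw [hc]
  rw [h0, h1, h2, h3, h4]

lemma braid3 (i j : Fin k) (hg : CfM k i j = -((1:ℝ)/2)) :
    (sig i * sig j) ^ 3 = 1 := by
  apply LinearMap.ext; intro v
  simp only [Module.End.one_apply, pow_succ, pow_zero, one_mul, Module.End.mul_apply]
  have h0 : v = v + (0:ℝ) • eV i + (0:ℝ) • eV j := by module
  have h1 : sig j (v + (0:ℝ) • eV i + (0:ℝ) • eV j) = v + (0:ℝ) • eV i + (-(2 * Kmap j v)) • eV j := by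
    rw [sig_step' i j 1 _ _ hg]
    have hc : (-((0:ℝ)) + 1 * ((0:ℝ)) - 2 * Kmap j v) = (-(2 * Kmap j v)) := by ring
    rw [hc]
  have h2 : sig i (v + (0:ℝ) • eV i + (-(2 * Kmap j v)) • eV j) = v + (-(2 * Kmap i v)-(2 * Kmap j v)) • eV i + (-(2 * Kmap j v)) • eV j := by
    rw [sig_step i j 1 _ _ hg]
    have hc : (-((0:ℝ)) + 1 * ((-(2 * Kmap j v))) - 2 * Kmap i v) = (-(2 * Kmap i v)-(2 * Kmap j v)) := by ring
    rw [hc]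
  have h3 : sig j (v + (-(2 * Kmap i v)-(2 * Kmap j v)) • eV i + (-(2 * Kmap j v)) • eV j) = v + (-(2 * Kmap i v)-(2 * Kmap j v)) • eV i + (-(2 * Kmap i v)-(2 * Kmap j v)) • eV j := by
    rw [sig_step' i j 1 _ _ hg]
    have hc : (-((-(2 * Kmap j v))) + 1 * ((-(2 * Kmap i v)-(2 * Kmap j v))) - 2 * Kmap j v) = (-(2 * Kmap i v)-(2 * Kmap j v)) := by ring
    rw [hc]
  have h4 : sig i (v + (-(2 * Kmap i v)-(2 * Kmap j v)) • eV i + (-(2 * Kmap i v)-(2 * Kmap j v)) • eV j) = v + (-(2 * Kmap i v)) • eV i + (-(2 * Kmap i v)-(2 * Kmap j v)) • eV j := by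
    rw [sig_step i j 1 _ _ hg]
    have hc : (-((-(2 * Kmap i v)-(2 * Kmap j v))) + 1 * ((-(2 * Kmap i v)-(2 * Kmap j v))) - 2 * Kmap i v) = (-(2 * Kmap i v)) := by ring
    rw [hc]
  have h5 : sig j (v + (-(2 * Kmap i v)) • eV i + (-(2 * Kmap i v)-(2 * Kmap j v)) • eV j) = v + (-(2 * Kmap i v)) • eV i + (0:ℝ) • eV j := by
    rw [sig_step' i j 1 _ _ hg]
    have hc : (-((-(2 * Kmap i v)-(2 * Kmap j v))) + 1 * ((-(2 * Kmap i v))) - 2 * Kmap j v) = (0:ℝ) := by ring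
    rw [hc]
  have h6 : sig i (v + (-(2 * Kmap i v)) • eV i + (0:ℝ) • eV j) = v + (0:ℝ) • eV i + (0:ℝ) • eV j := by
    rw [sig_step i j 1 _ _ hg]
    have hc : (-((-(2 * Kmap i v))) + 1 * ((0:ℝ)) - 2 * Kmap i v) = (0:ℝ) := by ring
    rw [hc]
  rw [h0, h1, h2, h3, h4, h5, h6]

lemma braid5 (i j : Fin k) (g : ℝ) (hg : CfM k i j = -(g/2)) (hg2 : g^2 = g + 1) :
    (sig i * sig j) ^ 5 = 1 := by
  apply LinearMap.ext; intro v
  simp only [Module.End.one_apply, pow_succ, pow_zero, one_mul, Module.End.mul_apply]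
  have h0 : v = v + (0:ℝ) • eV i + (0:ℝ) • eV j := by module
  have h1 : sig j (v + (0:ℝ) • eV i + (0:ℝ) • eV j) = v + (0:ℝ) • eV i + (-(2 * Kmap j v)) • eV j := by
    rw [sig_step' i j g _ _ hg]
    have hc : (-((0:ℝ)) + g * ((0:ℝ)) - 2 * Kmap j v) = (-(2 * Kmap j v)) := by ring
    rw [hc]
  have h2 : sig i (v + (0:ℝ) • eV i + (-(2 * Kmap j v)) • eV j) = v + (-(2 * Kmap i v)-g*(2 * Kmap j v)) • eV i + (-(2 * Kmap j v)) • eV j := by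
    rw [sig_step i j g _ _ hg]
    have hc : (-((0:ℝ)) + g * ((-(2 * Kmap j v))) - 2 * Kmap i v) = (-(2 * Kmap i v)-g*(2 * Kmap j v)) := by ring
    rw [hc]
  have h3 : sig j (v + (-(2 * Kmap i v)-g*(2 * Kmap j v)) • eV i + (-(2 * Kmap j v)) • eV j) = v + (-(2 * Kmap i v)-g*(2 * Kmap j v)) • eV i + (-g*(2 * Kmap i v)-(1+g)*(2 * Kmap j v)) • eV j := by
    rw [sig_step' i j g _ _ hg]
    have hc : (-((-(2 * Kmap j v))) + g * ((-(2 * Kmap i v)-g*(2 * Kmap j v))) - 2 * Kmap j v) = (-g*(2 * Kmap i v)-(1+g)*(2 * Kmap j v)) := by linear_combination ((-(2 * Kmap j v))) * hg2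
    rw [hc]
  have h4 : sig i (v + (-(2 * Kmap i v)-g*(2 * Kmap j v)) • eV i + (-g*(2 * Kmap i v)-(1+g)*(2 * Kmap j v)) • eV j) = v + (-(1+g)*(2 * Kmap i v)-(1+g)*(2 * Kmap j v)) • eV i + (-g*(2 * Kmap i v)-(1+g)*(2 * Kmap j v)) • eV j := by
    rw [sig_step i j g _ _ hg]
    have hc : (-((-(2 * Kmap i v)-g*(2 * Kmap j v))) + g * ((-g*(2 * Kmap i v)-(1+g)*(2 * Kmap j v))) - 2 * Kmap i v) = (-(1+g)*(2 * Kmap i v)-(1+g)*(2 * Kmap j v)) := by linear_combination ((-((2 * Kmap i v)+(2 * Kmap j v)))) * hg2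
    rw [hc]
  have h5 : sig j (v + (-(1+g)*(2 * Kmap i v)-(1+g)*(2 * Kmap j v)) • eV i + (-g*(2 * Kmap i v)-(1+g)*(2 * Kmap j v)) • eV j) = v + (-(1+g)*(2 * Kmap i v)-(1+g)*(2 * Kmap j v)) • eV i + (-(1+g)*(2 * Kmap i v)-(1+g)*(2 * Kmap j v)) • eV j := by
    rw [sig_step' i j g _ _ hg]
    have hc : (-((-g*(2 * Kmap i v)-(1+g)*(2 * Kmap j v))) + g * ((-(1+g)*(2 * Kmap i v)-(1+g)*(2 * Kmap j v))) - 2 * Kmap j v) = (-(1+g)*(2 * Kmap i v)-(1+g)*(2 * Kmap j v)) := by linear_combination ((-((2 * Kmap i v)+(2 * Kmap j v)))) * hg2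
    rw [hc]
  have h6 : sig i (v + (-(1+g)*(2 * Kmap i v)-(1+g)*(2 * Kmap j v)) • eV i + (-(1+g)*(2 * Kmap i v)-(1+g)*(2 * Kmap j v)) • eV j) = v + (-(1+g)*(2 * Kmap i v)-g*(2 * Kmap j v)) • eV i + (-(1+g)*(2 * Kmap i v)-(1+g)*(2 * Kmap j v)) • eV j := by
    rw [sig_step i j g _ _ hg]
    have hc : (-((-(1+g)*(2 * Kmap i v)-(1+g)*(2 * Kmap j v))) + g * ((-(1+g)*(2 * Kmap i v)-(1+g)*(2 * Kmap j v))) - 2 * Kmap i v) = (-(1+g)*(2 * Kmap i v)-g*(2 * Kmap j v)) := by linear_combination ((-((2 * Kmap i v)+(2 * Kmap j v)))) * hg2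
    rw [hc]
  have h7 : sig j (v + (-(1+g)*(2 * Kmap i v)-g*(2 * Kmap j v)) • eV i + (-(1+g)*(2 * Kmap i v)-(1+g)*(2 * Kmap j v)) • eV j) = v + (-(1+g)*(2 * Kmap i v)-g*(2 * Kmap j v)) • eV i + (-g*(2 * Kmap i v)-(2 * Kmap j v)) • eV j := by
    rw [sig_step' i j g _ _ hg]
    have hc : (-((-(1+g)*(2 * Kmap i v)-(1+g)*(2 * Kmap j v))) + g * ((-(1+g)*(2 * Kmap i v)-g*(2 * Kmap j v))) - 2 * Kmap j v) = (-g*(2 * Kmap i v)-(2 * Kmap j v)) := by linear_combination ((-((2 * Kmap i v)+(2 * Kmap j v)))) * hg2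
    rw [hc]
  have h8 : sig i (v + (-(1+g)*(2 * Kmap i v)-g*(2 * Kmap j v)) • eV i + (-g*(2 * Kmap i v)-(2 * Kmap j v)) • eV j) = v + (-(2 * Kmap i v)) • eV i + (-g*(2 * Kmap i v)-(2 * Kmap j v)) • eV j := by
    rw [sig_step i j g _ _ hg]
    have hc : (-((-(1+g)*(2 * Kmap i v)-g*(2 * Kmap j v))) + g * ((-g*(2 * Kmap i v)-(2 * Kmap j v))) - 2 * Kmap i v) = (-(2 * Kmap i v)) := by linear_combination ((-(2 * Kmap i v))) * hg2
    rw [hc]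
  have h9 : sig j (v + (-(2 * Kmap i v)) • eV i + (-g*(2 * Kmap i v)-(2 * Kmap j v)) • eV j) = v + (-(2 * Kmap i v)) • eV i + (0:ℝ) • eV j := by
    rw [sig_step' i j g _ _ hg]
    have hc : (-((-g*(2 * Kmap i v)-(2 * Kmap j v))) + g * ((-(2 * Kmap i v))) - 2 * Kmap j v) = (0:ℝ) := by ring
    rw [hc]
  have h10 : sig i (v + (-(2 * Kmap i v)) • eV i + (0:ℝ) • eV j) = v + (0:ℝ) • eV i + (0:ℝ) • eV j := by
    rw [sig_step i j g _ _ hg]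
    have hc : (-((-(2 * Kmap i v))) + g * ((0:ℝ)) - 2 * Kmap i v) = (0:ℝ) := by ring
    rw [hc]
  rw [h0, h1, h2, h3, h4, h5, h6, h7, h8, h9, h10]


lemma lift_ok (k : ℕ) : CoxeterMatrix.IsLiftable (Hmat k) (sig (k := k)) := by
  intro i j
  by_cases hij : i = j
  · subst hij
    have h1 : (Hmat k) i i = 1 := by rw [Hmat_apply, genM_diag]
    rw [h1, pow_one, sig_invol]
  · have hM : (Hmat k) i j = genM 5 i j := rfl
    rcases genM_cases i j hij with h | h | h
    · rw [hM, h]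
      exact braid2 i j (by unfold CfM; rw [h]; norm_num [cf])
    · rw [hM, h]
      exact braid3 i j (by unfold CfM; rw [h]; norm_num [cf])
    · rw [hM, h]
      refine braid5 i j phR (by unfold CfM; rw [h]; norm_num [cf]) phR_sq

variable {W : Type*} [Group W] (cs : CoxeterSystem (Hmat k) W)

/-- The geometric representation. -/
def rho : W →* Module.End ℝ (Fin k → ℝ) := cs.lift ⟨sig, lift_ok k⟩

lemma rho_simple (i : Fin k) : rho cs (cs.simple i) = sig i :=
  cs.lift_apply_simple (lift_ok k) i

lemma rho_inv_cancel (w : W) (v : Fin k → ℝ) : rho cs w⁻¹ (rho cs w v) = v := by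
  have : rho cs w⁻¹ * rho cs w = 1 := by
    rw [← map_mul, inv_mul_cancel, map_one]
  calc rho cs w⁻¹ (rho cs w v) = (rho cs w⁻¹ * rho cs w) v := rfl
    _ = v := by rw [this]; rfl

/-- positivity of a vector -/
def PosV (v : Fin k → ℝ) : Prop := ∀ l, 0 ≤ v l

lemma posV_eV (i : Fin k) : PosV (eV i) := by
  intro l
  unfold eV
  rcases eq_or_ne l i with h | h
  · subst h; simp
  · simp [Pi.single_apply, h]

lemma sig_span (i j : Fin k) (g A B : ℝ) (hg : CfM k i j = -(g/2)) :
    sig i (A • eV i + B • eV j) = (-A + g * B) • eV i + B • eV j := by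
  have h := sig_step i j g A B hg 0
  simpa using h

lemma sig_span' (i j : Fin k) (g A B : ℝ) (hg : CfM k i j = -(g/2)) :
    sig j (A • eV i + B • eV j) = A • eV i + (-B + g * A) • eV j := by
  have h := sig_step' i j g A B hg 0
  simpa using h

lemma rho_word (ω : List (Fin k)) (v : Fin k → ℝ) :
    rho cs (cs.wordProd ω) v = ((ω.map sig).prod) v := by
  induction ω generalizing v with
  | nil => simp [CoxeterSystem.wordProd_nil]
  | cons a ω ih =>
      rw [CoxeterSystem.wordProd_cons, map_mul, List.map_cons, List.prod_cons]
      calc (rho cs (cs.simple a) * rho cs (cs.wordProd ω)) v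
          = rho cs (cs.simple a) (rho cs (cs.wordProd ω) v) := rfl
        _ = rho cs (cs.simple a) ((ω.map sig).prod v) := by rw [ih]
        _ = (sig a) ((ω.map sig).prod v) := by rw [rho_simple]
        _ = _ := rfl

/-- dihedral vector fact -/
lemma dvf (i j : Fin k) (hij : i ≠ j) (r : ℕ) (hr : r < genM 5 i j) :
    ∃ A B : ℝ, 0 ≤ A ∧ 0 ≤ B ∧
      rho cs (cs.wordProd (alternatingWord i j r)) (eV i) = A • eV i + B • eV j := by
  have e0 : eV (k := k) i = (1:ℝ) • eV i + (0:ℝ) • eV j := by module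
  have hgpos : 0 ≤ phR := le_of_lt phR_pos
  rcases genM_cases i j hij with h | h | h
  · rw [h] at hr
    have hg : CfM k i j = -((0:ℝ)/2) := by unfold CfM; rw [h]; norm_num [cf]
    interval_cases r
    · exact ⟨1, 0, by norm_num, by norm_num, by simp [CoxeterSystem.wordProd_nil, alternatingWord]⟩
    · refine ⟨1, 0, by norm_num, by norm_num, ?_⟩
      rw [show alternatingWord i j 1 = [j] from rfl, CoxeterSystem.wordProd_singleton, rho_simple]
      rw [e0, sig_span' i j 0 _ _ hg]; norm_num
  · rw [h] at hr
    have hg : CfM k i j = -((1:ℝ)/2) := by unfold CfM; rw [h]; norm_num [cf]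
    interval_cases r
    · exact ⟨1, 0, by norm_num, by norm_num, by simp [CoxeterSystem.wordProd_nil, alternatingWord]⟩
    · refine ⟨1, 1, by norm_num, by norm_num, ?_⟩
      rw [show alternatingWord i j 1 = [j] from rfl, CoxeterSystem.wordProd_singleton, rho_simple]
      rw [e0, sig_span' i j 1 _ _ hg]; norm_num
    · refine ⟨0, 1, by norm_num, by norm_num, ?_⟩
      rw [show alternatingWord i j 2 = [i, j] from rfl]
      have : cs.wordProd [i, j] = cs.simple i * cs.simple j := by
        rw [CoxeterSystem.wordProd_cons, CoxeterSystem.wordProd_singleton]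
      rw [this, map_mul]
      have step1 : rho cs (cs.simple j) (eV i) = (1:ℝ) • eV i + (1:ℝ) • eV j := by
        rw [rho_simple, e0, sig_span' i j 1 _ _ hg]; norm_num
      calc (rho cs (cs.simple i) * rho cs (cs.simple j)) (eV i)
          = rho cs (cs.simple i) (rho cs (cs.simple j) (eV i)) := rfl
        _ = rho cs (cs.simple i) ((1:ℝ) • eV i + (1:ℝ) • eV j) := by rw [step1]
        _ = (0:ℝ) • eV i + (1:ℝ) • eV j := by
              rw [rho_simple, sig_span i j 1 _ _ hg]; norm_num
  · rw [h] at hr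
    have hg : CfM k i j = -(phR/2) := by unfold CfM; rw [h]; norm_num [cf]
    have hg2 : phR^2 = phR + 1 := phR_sq
    -- helper applications
    have sj : ∀ A B : ℝ, rho cs (cs.simple j) (A • eV i + B • eV j)
        = A • eV i + (-B + phR * A) • eV j := by
      intro A B; rw [rho_simple, sig_span' i j phR _ _ hg]
    have si : ∀ A B : ℝ, rho cs (cs.simple i) (A • eV i + B • eV j)
        = (-A + phR * B) • eV i + B • eV j := by
      intro A B; rw [rho_simple, sig_span i j phR _ _ hg]
    interval_cases r
    · exact ⟨1, 0, by norm_num, by norm_num, by simp [CoxeterSystem.wordProd_nil, alternatingWord]⟩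
    · refine ⟨1, phR, by norm_num, hgpos, ?_⟩
      rw [show alternatingWord i j 1 = [j] from rfl, CoxeterSystem.wordProd_singleton]
      rw [e0, sj]; norm_num
    · refine ⟨phR, phR, hgpos, hgpos, ?_⟩
      rw [show alternatingWord i j 2 = [i, j] from rfl,
        show cs.wordProd [i,j] = cs.simple i * cs.simple j by
          rw [CoxeterSystem.wordProd_cons, CoxeterSystem.wordProd_singleton], map_mul]
      have t1 : rho cs (cs.simple j) (eV i) = (1:ℝ) • eV i + phR • eV j := by
        rw [e0, sj]; norm_num
      calc (rho cs (cs.simple i) * rho cs (cs.simple j)) (eV i)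
          = rho cs (cs.simple i) (rho cs (cs.simple j) (eV i)) := rfl
        _ = rho cs (cs.simple i) ((1:ℝ) • eV i + phR • eV j) := by rw [t1]
        _ = phR • eV i + phR • eV j := by
              rw [si]
              have : (-1 + phR * phR : ℝ) = phR := by linear_combination hg2
              rw [show (-(1:ℝ) + phR * phR) = phR by linear_combination hg2]
    · refine ⟨phR, 1, hgpos, by norm_num, ?_⟩
      rw [show alternatingWord i j 3 = [j, i, j] from rfl,
        show cs.wordProd [j,i,j] = cs.simple j * (cs.simple i * cs.simple j) by
          rw [CoxeterSystem.wordProd_cons, CoxeterSystem.wordProd_cons,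
            CoxeterSystem.wordProd_singleton], map_mul, map_mul]
      have t1 : rho cs (cs.simple j) (eV i) = (1:ℝ) • eV i + phR • eV j := by
        rw [e0, sj]; norm_num
      have t2 : rho cs (cs.simple i) ((1:ℝ) • eV i + phR • eV j) = phR • eV i + phR • eV j := by
        rw [si, show (-(1:ℝ) + phR * phR) = phR by linear_combination hg2]
      have t3 : rho cs (cs.simple j) (phR • eV i + phR • eV j) = phR • eV i + (1:ℝ) • eV j := by
        rw [sj, show (-phR + phR * phR : ℝ) = 1 by linear_combination hg2]
      calc (rho cs (cs.simple j) * (rho cs (cs.simple i) * rho cs (cs.simple j))) (eV i)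
          = rho cs (cs.simple j) (rho cs (cs.simple i) (rho cs (cs.simple j) (eV i))) := rfl
        _ = phR • eV i + (1:ℝ) • eV j := by rw [t1, t2, t3]
    · refine ⟨0, 1, by norm_num, by norm_num, ?_⟩
      rw [show alternatingWord i j 4 = [i, j, i, j] from rfl,
        show cs.wordProd [i,j,i,j] = cs.simple i * (cs.simple j * (cs.simple i * cs.simple j)) by
          rw [CoxeterSystem.wordProd_cons, CoxeterSystem.wordProd_cons,
            CoxeterSystem.wordProd_cons, CoxeterSystem.wordProd_singleton],
        map_mul, map_mul, map_mul]
      have t1 : rho cs (cs.simple j) (eV i) = (1:ℝ) • eV i + phR • eV j := by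
        rw [e0, sj]; norm_num
      have t2 : rho cs (cs.simple i) ((1:ℝ) • eV i + phR • eV j) = phR • eV i + phR • eV j := by
        rw [si, show (-(1:ℝ) + phR * phR) = phR by linear_combination hg2]
      have t3 : rho cs (cs.simple j) (phR • eV i + phR • eV j) = phR • eV i + (1:ℝ) • eV j := by
        rw [sj, show (-phR + phR * phR : ℝ) = 1 by linear_combination hg2]
      have t4 : rho cs (cs.simple i) (phR • eV i + (1:ℝ) • eV j) = (0:ℝ) • eV i + (1:ℝ) • eV j := by
        rw [si, show (-phR + phR * 1 : ℝ) = 0 by ring]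
      calc (rho cs (cs.simple i) * (rho cs (cs.simple j) * (rho cs (cs.simple i) * rho cs (cs.simple j)))) (eV i)
          = rho cs (cs.simple i) (rho cs (cs.simple j) (rho cs (cs.simple i) (rho cs (cs.simple j) (eV i)))) := rfl
        _ = (0:ℝ) • eV i + (1:ℝ) • eV j := by rw [t1, t2, t3, t4]

lemma chainStep (N : ℕ)
    (IH : ∀ v : W, ∀ a : Fin k, cs.length v ≤ N →
      cs.length (v * cs.simple a) = cs.length v + 1 → PosV (rho cs v (eV a)))
    (i j : Fin k) (hij : i ≠ j) (w : W)
    (hasc : cs.length (w * cs.simple i) = cs.length w + 1) :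
    ∀ d r, 1 ≤ r → r + d = genM 5 i j →
      ∀ v : W, w = v * cs.wordProd (alternatingWord i j r) →
        cs.length v + r = cs.length w → cs.length w ≤ N + 1 →
        PosV (rho cs w (eV i)) := by
  intro d
  induction d with
  | zero =>
    intro r h1 hrm v hfac hlen hwN
    exfalso
    rw [Nat.add_zero] at hrm
    have hbraid : cs.wordProd (alternatingWord i j r) = cs.wordProd (alternatingWord j i r) := by
      have hb := cs.wordProd_braidWord_eq i j
      unfold CoxeterSystem.braidWord at hb
      have h1' : (Hmat k) i j = r := hrm.symm
      have h2' : (Hmat k) j i = r := by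
        rw [show ((Hmat k) j i = genM 5 j i) from rfl, genM_symm]; exact hrm.symm
      rw [h1', h2'] at hb
      exact hb
    obtain ⟨r', rfl⟩ : ∃ r', r = r' + 1 := ⟨r - 1, by omega⟩
    have hconcat : alternatingWord j i (r' + 1) = (alternatingWord i j r').concat i :=
      CoxeterSystem.alternatingWord_succ j i r'
    have hkey : w * cs.simple i = v * cs.wordProd (alternatingWord i j r') := by
      rw [hfac, hbraid, hconcat, CoxeterSystem.wordProd_concat]
      rw [mul_assoc, mul_assoc, cs.simple_mul_simple_self, mul_one]
    have hle : cs.length (w * cs.simple i) ≤ cs.length v + r' := by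
      rw [hkey]
      calc cs.length (v * cs.wordProd (alternatingWord i j r'))
          ≤ cs.length v + cs.length (cs.wordProd (alternatingWord i j r')) :=
            cs.length_mul_le _ _
        _ ≤ cs.length v + r' := by
            have hh := cs.length_wordProd_le (alternatingWord i j r')
            rw [CoxeterSystem.length_alternatingWord] at hh
            omega
    omega
  | succ d IHd =>
    intro r h1 hrm v hfac hlen hwN
    obtain ⟨r', rfl⟩ : ∃ r', r = r' + 1 := ⟨r - 1, by omega⟩
    set h : Fin k := if Even (r' + 1) then j else i with hh
    rcases cs.length_mul_simple v h with hvasc | hvdesc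
    · -- stop : both ascents at v
      set h' : Fin k := if Even r' then j else i with hh'
      have hstruct : alternatingWord i j (r' + 1) = h' :: alternatingWord i j r' :=
        CoxeterSystem.alternatingWord_succ' i j r'
      have hw' : w = (v * cs.simple h') * cs.wordProd (alternatingWord i j r') := by
        rw [hfac, hstruct, CoxeterSystem.wordProd_cons, ← mul_assoc]
      have hge : cs.length v + 1 ≤ cs.length (v * cs.simple h') := by
        have hb : cs.length w ≤ cs.length (v * cs.simple h') + r' := by
          rw [hw']
          calc cs.length ((v * cs.simple h') * cs.wordProd (alternatingWord i j r'))
              ≤ cs.length (v * cs.simple h') +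
                cs.length (cs.wordProd (alternatingWord i j r')) := cs.length_mul_le _ _
            _ ≤ cs.length (v * cs.simple h') + r' := by
                have hh2 := cs.length_wordProd_le (alternatingWord i j r')
                rw [CoxeterSystem.length_alternatingWord] at hh2
                omega
        omega
      have hvasc' : cs.length (v * cs.simple h') = cs.length v + 1 := by
        rcases cs.length_mul_simple v h' with hx | hx <;> omega
      have hcovi : cs.length (v * cs.simple i) = cs.length v + 1 := by
        by_cases he : Even r'
        · have h1' : h = i := by
            rw [hh, if_neg (by simpa [Nat.even_add_one] using he)]
          rw [← h1']; exact hvasc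
        · have h1' : h' = i := by rw [hh', if_neg he]
          rw [← h1']; exact hvasc'
      have hcovj : cs.length (v * cs.simple j) = cs.length v + 1 := by
        by_cases he : Even r'
        · have h1' : h' = j := by rw [hh', if_pos he]
          rw [← h1']; exact hvasc'
        · have h1' : h = j := by
            rw [hh, if_pos (by simpa [Nat.even_add_one] using he)]
          rw [← h1']; exact hvasc
      have hvN : cs.length v ≤ N := by omega
      have Pi' := IH v i hvN hcovi
      have Pj' := IH v j hvN hcovj
      obtain ⟨A, B, hA, hB, hAB⟩ := dvf cs i j hij (r' + 1) (by omega)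
      have hkey : rho cs w (eV i) = A • (rho cs v (eV i)) + B • (rho cs v (eV j)) := by
        rw [hfac, map_mul]
        calc (rho cs v * rho cs (cs.wordProd (alternatingWord i j (r'+1)))) (eV i)
            = rho cs v (rho cs (cs.wordProd (alternatingWord i j (r'+1))) (eV i)) := rfl
          _ = rho cs v (A • eV i + B • eV j) := by rw [hAB]
          _ = _ := by rw [map_add, map_smul, map_smul]
      intro l
      rw [hkey]
      simp only [Pi.add_apply, Pi.smul_apply, smul_eq_mul]
      exact add_nonneg (mul_nonneg hA (Pi' l)) (mul_nonneg hB (Pj' l))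
    · -- extend the chain
      have hfac' : w = (v * cs.simple h) * cs.wordProd (alternatingWord i j (r' + 2)) := by
        have hstruct : alternatingWord i j (r' + 2) = h :: alternatingWord i j (r' + 1) :=
          CoxeterSystem.alternatingWord_succ' i j (r' + 1)
        calc w = v * cs.wordProd (alternatingWord i j (r' + 1)) := hfac
          _ = ((v * cs.simple h) * cs.simple h) * cs.wordProd (alternatingWord i j (r' + 1)) := by
              rw [cs.simple_mul_simple_cancel_right]
          _ = (v * cs.simple h) * (cs.simple h * cs.wordProd (alternatingWord i j (r' + 1))) := by
              rw [mul_assoc]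
          _ = (v * cs.simple h) * cs.wordProd (alternatingWord i j (r' + 2)) := by
              rw [hstruct, CoxeterSystem.wordProd_cons]
      exact IHd (r' + 2) (by omega) (by omega) (v * cs.simple h) hfac' (by omega) hwN

theorem posAscentAux : ∀ N : ℕ, ∀ w : W, ∀ i : Fin k, cs.length w ≤ N →
    cs.length (w * cs.simple i) = cs.length w + 1 → PosV (rho cs w (eV i)) := by
  intro N
  induction N with
  | zero =>
    intro w i hw _
    have hw1 : w = 1 := cs.length_eq_zero_iff.mp (Nat.le_zero.mp hw)
    subst hw1
    rw [map_one]
    exact posV_eV i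
  | succ N IH =>
    intro w i hw hasc
    rcases Nat.lt_or_ge (cs.length w) (N + 1) with hlt | hge
    · exact IH w i (by omega) hasc
    have hlen : cs.length w = N + 1 := by omega
    have hw1 : w ≠ 1 := by
      intro h; rw [h, cs.length_one] at hlen; omega
    obtain ⟨j, hj⟩ := cs.exists_rightDescent_of_ne_one hw1
    have hj' : cs.length (w * cs.simple j) < cs.length w := hj
    have hij : i ≠ j := by
      rintro rfl; omega
    have hdesc : cs.length (w * cs.simple j) + 1 = cs.length w := by
      rcases cs.length_mul_simple w j with hx | hx <;> omega
    have hm2 : 2 ≤ genM 5 i j := by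
      rcases genM_cases i j hij with hx | hx | hx <;> omega
    apply chainStep cs N IH i j hij w hasc (genM 5 i j - 1) 1 le_rfl (by omega)
        (w * cs.simple j) ?_ (by omega) (by omega)
    rw [show alternatingWord i j 1 = [j] from rfl, CoxeterSystem.wordProd_singleton]
    rw [mul_assoc, cs.simple_mul_simple_self, mul_one]

lemma posAscent (w : W) (i : Fin k) (h : cs.length (w * cs.simple i) = cs.length w + 1) :
    PosV (rho cs w (eV i)) := posAscentAux cs (cs.length w) w i le_rfl h

def NegV (v : Fin k → ℝ) : Prop := ∀ l, v l ≤ 0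

lemma sig_eV (i : Fin k) : sig i (eV i) = -(eV i) := by
  rw [sig_apply, Kmap_eV, CfM_diag]
  module

lemma negDescent (w : W) (i : Fin k) (h : cs.length (w * cs.simple i) + 1 = cs.length w) :
    NegV (rho cs w (eV i)) := by
  have hw : w = (w * cs.simple i) * cs.simple i := by
    rw [cs.simple_mul_simple_cancel_right]
  have hkey : rho cs w (eV i) = -(rho cs (w * cs.simple i) (eV i)) := by
    calc rho cs w (eV i) = rho cs ((w * cs.simple i) * cs.simple i) (eV i) := by rw [← hw]
      _ = (rho cs (w * cs.simple i) * rho cs (cs.simple i)) (eV i) := by rw [map_mul]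
      _ = rho cs (w * cs.simple i) (sig i (eV i)) := by rw [rho_simple]; rfl
      _ = rho cs (w * cs.simple i) (-(eV i)) := by rw [sig_eV]
      _ = -(rho cs (w * cs.simple i) (eV i)) := by rw [map_neg]
  have hpos : PosV (rho cs (w * cs.simple i) (eV i)) := by
    apply posAscent
    rw [cs.simple_mul_simple_cancel_right]
    omega
  intro l
  rw [hkey]
  simp only [Pi.neg_apply]
  have := hpos l
  linarith

lemma rho_eV_ne_zero (w : W) (i : Fin k) : rho cs w (eV i) ≠ 0 := by
  intro h
  have h2 := rho_inv_cancel cs w (eV i)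
  rw [h, map_zero] at h2
  have h3 : eV (k := k) i i = 0 := by rw [← h2]; rfl
  unfold eV at h3
  simp at h3

lemma pos_neg_contra (w : W) (i : Fin k) (hp : PosV (rho cs w (eV i)))
    (hn : NegV (rho cs w (eV i))) : False := by
  apply rho_eV_ne_zero cs w i
  funext l
  have := hp l; have := hn l
  simp only [Pi.zero_apply]
  linarith

/-- left versions -/
lemma posAscentL (w : W) (i : Fin k) (h : cs.length (cs.simple i * w) = cs.length w + 1) :
    PosV (rho cs w⁻¹ (eV i)) := by
  apply posAscent
  have : w⁻¹ * cs.simple i = (cs.simple i * w)⁻¹ := by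
    rw [mul_inv_rev, cs.inv_simple]
  rw [this, cs.length_inv, cs.length_inv, h]

lemma negDescentL (w : W) (i : Fin k) (h : cs.length (cs.simple i * w) + 1 = cs.length w) :
    NegV (rho cs w⁻¹ (eV i)) := by
  apply negDescent
  have : w⁻¹ * cs.simple i = (cs.simple i * w)⁻¹ := by
    rw [mul_inv_rev, cs.inv_simple]
  rw [this, cs.length_inv, cs.length_inv, h]

/-- FC property (copied from the problem file) -/
lemma reverse_alternatingWord {B : Type*} (i j : B) (m : ℕ) :
    (alternatingWord i j m).reverse
      = if Even m then alternatingWord j i m else alternatingWord i j m := by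
  induction m generalizing i j with
  | zero => simp [alternatingWord]
  | succ m ih =>
    by_cases he : Even m
    · rw [if_neg (by simpa [Nat.even_add_one] using he)]
      have e2 : alternatingWord i j (m+1) = j :: alternatingWord i j m := by
        rw [CoxeterSystem.alternatingWord_succ' i j m, if_pos he]
      calc (alternatingWord i j (m+1)).reverse
          = ((alternatingWord j i m).concat j).reverse := by
            rw [← CoxeterSystem.alternatingWord_succ i j m]
        _ = j :: (alternatingWord j i m).reverse := by simp
        _ = j :: alternatingWord i j m := by rw [ih j i, if_pos he]
        _ = alternatingWord i j (m+1) := e2.symm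
    · rw [if_pos (by simpa [Nat.even_add_one] using he)]
      have e2 : alternatingWord j i (m+1) = j :: alternatingWord j i m := by
        rw [CoxeterSystem.alternatingWord_succ' j i m, if_neg he]
      calc (alternatingWord i j (m+1)).reverse
          = ((alternatingWord j i m).concat j).reverse := by
            rw [← CoxeterSystem.alternatingWord_succ i j m]
        _ = j :: (alternatingWord j i m).reverse := by simp
        _ = j :: alternatingWord j i m := by rw [ih j i, if_neg he]
        _ = alternatingWord j i (m+1) := e2.symm

lemma wordProd_alt_inv (x y : Fin k) (r : ℕ) :
    (cs.wordProd (alternatingWord x y r))⁻¹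
      = cs.wordProd ((alternatingWord x y r).reverse) := by
  rw [CoxeterSystem.wordProd_reverse]

lemma twoDescentL (w : W) (a b : Fin k) (hm : 3 ≤ genM 5 a b)
    (ha : cs.length (cs.simple a * w) + 1 = cs.length w)
    (hb : cs.length (cs.simple b * w) + 1 = cs.length w)
    (hFC : FC cs w) : False := by
  have hab : a ≠ b := by
    intro h
    rw [h, genM_diag] at hm
    omega
  -- greedy stripping
  have greedy : ∀ d : ℕ, ∀ (x y : Fin k) (r : ℕ) (v : W),
      ((x = a ∧ y = b) ∨ (x = b ∧ y = a)) →
      w = cs.wordProd (alternatingWord x y r) * v →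
      cs.length v + r = cs.length w →
      1 ≤ r → r + d = genM 5 a b → False := by
    intro d
    induction d with
    | zero =>
      intro x y r v hxy hfac hlen h1 hrm
      rw [Nat.add_zero] at hrm
      apply hFC
      have hMxy : (Hmat k) x y = genM 5 a b := by
        rcases hxy with ⟨rfl, rfl⟩ | ⟨rfl, rfl⟩
        · rfl
        · exact genM_symm 5 _ _
      refine ⟨1, v, x, y, ?_, ?_, ?_⟩
      · rw [hMxy]; exact hm
      · rw [one_mul, hMxy, ← hrm]; exact hfac
      · have hle1 : cs.length (cs.wordProd (alternatingWord x y r)) ≤ r := by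
          have := cs.length_wordProd_le (alternatingWord x y r)
          rwa [CoxeterSystem.length_alternatingWord] at this
        have hle2 : cs.length w ≤ cs.length (cs.wordProd (alternatingWord x y r)) +
            cs.length v := by
          rw [hfac]; exact cs.length_mul_le _ _
        rw [hMxy, ← hrm, cs.length_one]
        omega
    | succ d IHd =>
      intro x y r v hxy hfac hlen h1 hrm
      rcases cs.length_simple_mul v x with hasc | hdesc
      · -- stop : contradiction via positivity
        -- y is also a left ascent of v
        obtain ⟨r', rfl⟩ : ∃ r', r = r' + 1 := ⟨r - 1, by omega⟩
        have hconcat : alternatingWord x y (r' + 1) = (alternatingWord y x r').concat y :=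
          CoxeterSystem.alternatingWord_succ x y r'
        have hw2 : w = cs.wordProd (alternatingWord y x r') * (cs.simple y * v) := by
          rw [hfac, hconcat, CoxeterSystem.wordProd_concat, mul_assoc]
        have hyasc : cs.length (cs.simple y * v) = cs.length v + 1 := by
          have hub : cs.length w ≤ r' + cs.length (cs.simple y * v) := by
            rw [hw2]
            calc cs.length (cs.wordProd (alternatingWord y x r') * (cs.simple y * v))
                ≤ cs.length (cs.wordProd (alternatingWord y x r')) +
                  cs.length (cs.simple y * v) := cs.length_mul_le _ _
              _ ≤ r' + cs.length (cs.simple y * v) := by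
                  have := cs.length_wordProd_le (alternatingWord y x r')
                  rw [CoxeterSystem.length_alternatingWord] at this
                  omega
          rcases cs.length_simple_mul v y with hx | hx <;> omega
        -- positivity of rho v⁻¹ on both letters
        have Px : PosV (rho cs v⁻¹ (eV x)) := posAscentL cs v x hasc
        have Py : PosV (rho cs v⁻¹ (eV y)) := posAscentL cs v y hyasc
        -- the reversed word
        set ξ : Fin k := if Even (r' + 1) then y else x with hξ
        have hrev : (alternatingWord x y (r' + 1)).reverse
            = if Even (r' + 1) then alternatingWord y x (r' + 1)
              else alternatingWord x y (r' + 1) := reverse_alternatingWord x y (r' + 1)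
        have hwinv : w⁻¹ = v⁻¹ * cs.wordProd ((alternatingWord x y (r' + 1)).reverse) := by
          rw [hfac, mul_inv_rev, wordProd_alt_inv]
        -- descent of w at ξ
        have hξdesc : cs.length (cs.simple ξ * w) + 1 = cs.length w := by
          have hmem : ξ = a ∨ ξ = b := by
            rw [hξ]
            rcases hxy with ⟨rfl, rfl⟩ | ⟨rfl, rfl⟩ <;> by_cases he : Even (r' + 1) <;>
              simp [he] <;> tauto
          rcases hmem with h | h <;> rw [h]
          · exact ha
          · exact hb
        have hNeg : NegV (rho cs w⁻¹ (eV ξ)) := negDescentL cs w ξ hξdesc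
        -- positivity computation
        obtain ⟨A, B, hA, hB, hAB⟩ :
            ∃ A B : ℝ, 0 ≤ A ∧ 0 ≤ B ∧
              rho cs (cs.wordProd ((alternatingWord x y (r' + 1)).reverse)) (eV ξ)
                = A • eV x + B • eV y := by
          have hmr : r' + 1 < genM 5 x y := by
            have : genM 5 x y = genM 5 a b := by
              rcases hxy with ⟨rfl, rfl⟩ | ⟨rfl, rfl⟩
              · rfl
              · exact genM_symm 5 _ _
            omega
          have hxyne : x ≠ y := by
            rcases hxy with ⟨rfl, rfl⟩ | ⟨rfl, rfl⟩
            · exact hab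
            · exact hab.symm
          by_cases he : Even (r' + 1)
          · rw [hrev, if_pos he, hξ, if_pos he]
            have hyx : r' + 1 < genM 5 y x := by rw [genM_symm 5 (y:ℕ) (x:ℕ)]; exact hmr
            obtain ⟨A, B, hA, hB, hAB⟩ := dvf cs y x hxyne.symm (r' + 1) hyx
            exact ⟨B, A, hB, hA, by rw [hAB]; module⟩
          · rw [hrev, if_neg he, hξ, if_neg he]
            exact dvf cs x y hxyne (r' + 1) hmr
        have hPos : PosV (rho cs w⁻¹ (eV ξ)) := by
          have hkey : rho cs w⁻¹ (eV ξ)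
              = A • (rho cs v⁻¹ (eV x)) + B • (rho cs v⁻¹ (eV y)) := by
            rw [hwinv, map_mul]
            calc (rho cs v⁻¹ * rho cs (cs.wordProd ((alternatingWord x y (r' + 1)).reverse))) (eV ξ)
                = rho cs v⁻¹ (rho cs (cs.wordProd ((alternatingWord x y (r' + 1)).reverse)) (eV ξ)) := rfl
              _ = rho cs v⁻¹ (A • eV x + B • eV y) := by rw [hAB]
              _ = _ := by rw [map_add, map_smul, map_smul]
          intro l
          rw [hkey]
          simp only [Pi.add_apply, Pi.smul_apply, smul_eq_mul]
          exact add_nonneg (mul_nonneg hA (Px l)) (mul_nonneg hB (Py l))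
        exact pos_neg_contra cs w⁻¹ ξ hPos hNeg
      · -- extend
        have hconcat : alternatingWord y x (r + 1) = (alternatingWord x y r).concat x :=
          CoxeterSystem.alternatingWord_succ y x r
        have hfac' : w = cs.wordProd (alternatingWord y x (r + 1)) * (cs.simple x * v) := by
          rw [hconcat, CoxeterSystem.wordProd_concat, mul_assoc, ← mul_assoc (cs.simple x),
            cs.simple_mul_simple_self, one_mul]
          exact hfac
        refine IHd y x (r + 1) (cs.simple x * v) ?_ hfac' (by omega) (by omega) (by omega)
        rcases hxy with ⟨rfl, rfl⟩ | ⟨rfl, rfl⟩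
        · right; exact ⟨rfl, rfl⟩
        · left; exact ⟨rfl, rfl⟩
  -- start the greedy process
  have hstart : w = cs.wordProd (alternatingWord b a 1) * (cs.simple a * w) := by
    rw [show alternatingWord b a 1 = [a] from rfl, CoxeterSystem.wordProd_singleton,
      ← mul_assoc, cs.simple_mul_simple_self, one_mul]
  exact greedy (genM 5 a b - 1) b a 1 (cs.simple a * w) (Or.inr ⟨rfl, rfl⟩) hstart
    (by omega) le_rfl (by omega)

lemma FC_inv (w : W) (h : FC cs w) : FC cs w⁻¹ := by
  rintro ⟨x₁, x₂, i, j, h3, heq, hlen⟩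
  apply h
  have hsym : (Hmat k) j i = (Hmat k) i j := (Hmat k).symmetric j i
  set u := cs.wordProd (alternatingWord i j ((Hmat k) i j)) with hu
  have hwp : u⁻¹ = cs.wordProd ((alternatingWord i j ((Hmat k) i j)).reverse) :=
    (cs.wordProd_reverse _).symm
  have hwinv : w = x₂⁻¹ * u⁻¹ * x₁⁻¹ := by
    have h0 : w⁻¹⁻¹ = (x₁ * u * x₂)⁻¹ := by rw [heq]
    rw [inv_inv] at h0
    rw [h0]; group
  have hlw : cs.length w⁻¹ = cs.length w := cs.length_inv w
  by_cases he : Even ((Hmat k) i j)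
  · have e1 : cs.wordProd (alternatingWord j i ((Hmat k) j i)) = u⁻¹ := by
      rw [hwp, reverse_alternatingWord, if_pos he, hsym]
    refine ⟨x₂⁻¹, x₁⁻¹, j, i, by omega, ?_, ?_⟩
    · rw [e1]; exact hwinv
    · rw [e1, cs.length_inv u, cs.length_inv x₂, cs.length_inv x₁]; omega
  · have e1 : cs.wordProd (alternatingWord i j ((Hmat k) i j)) = u⁻¹ := by
      rw [hwp, reverse_alternatingWord, if_neg he]
    refine ⟨x₂⁻¹, x₁⁻¹, i, j, h3, ?_, ?_⟩
    · rw [e1]; exact hwinv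
    · rw [e1, cs.length_inv u, cs.length_inv x₂, cs.length_inv x₁]; omega

lemma twoDescentR (w : W) (a b : Fin k) (hm : 3 ≤ genM 5 a b)
    (ha : cs.length (w * cs.simple a) + 1 = cs.length w)
    (hb : cs.length (w * cs.simple b) + 1 = cs.length w)
    (hFC : FC cs w) : False := by
  apply twoDescentL cs w⁻¹ a b hm ?_ ?_ (FC_inv cs w hFC)
  · have : cs.simple a * w⁻¹ = (w * cs.simple a)⁻¹ := by
      rw [mul_inv_rev, cs.inv_simple]
    rw [this, cs.length_inv, cs.length_inv]; omega
  · have : cs.simple b * w⁻¹ = (w * cs.simple b)⁻¹ := by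
      rw [mul_inv_rev, cs.inv_simple]
    rw [this, cs.length_inv, cs.length_inv]; omega

lemma FC_factor (w p y q : W) (hw : w = p * y * q)
    (hlen : cs.length w = cs.length p + cs.length y + cs.length q)
    (h : FC cs w) : FC cs y := by
  rintro ⟨x₁, x₂, i, j, h3, heq, hl⟩
  apply h
  refine ⟨p * x₁, x₂ * q, i, j, h3, ?_, ?_⟩
  · show w = (p * x₁) * cs.wordProd (alternatingWord i j ((Hmat k) i j)) * (x₂ * q)
    have heq' : y = x₁ * cs.wordProd (alternatingWord i j ((Hmat k) i j)) * x₂ := heq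
    rw [hw, heq']; group
  · show cs.length w = cs.length (p * x₁)
      + cs.length (cs.wordProd (alternatingWord i j ((Hmat k) i j))) + cs.length (x₂ * q)
    set u := cs.wordProd (alternatingWord i j ((Hmat k) i j)) with hu
    have heq' : y = x₁ * u * x₂ := heq
    have hl' : cs.length y = cs.length x₁ + cs.length u + cs.length x₂ := hl
    have e : w = ((p * x₁) * u) * (x₂ * q) := by rw [hw, heq']; group
    have l1 := cs.length_mul_le ((p * x₁) * u) (x₂ * q)
    have l2 := cs.length_mul_le (p * x₁) u
    have l3 := cs.length_mul_le p x₁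
    have l4 := cs.length_mul_le x₂ q
    rw [← e] at l1
    omega

lemma simple_comm (i j : Fin k) (h : genM 5 i j = 2) :
    cs.simple i * cs.simple j = cs.simple j * cs.simple i := by
  have h2 := cs.simple_mul_simple_pow i j
  rw [show ((Hmat k) i j : ℕ) = genM 5 i j from rfl, h] at h2
  have hx : (cs.simple i * cs.simple j) * (cs.simple i * cs.simple j) = 1 := by
    have : (cs.simple i * cs.simple j) ^ 2
        = (cs.simple i * cs.simple j) * (cs.simple i * cs.simple j) := sq _
    rw [← this]; exact h2
  have := eq_inv_of_mul_eq_one_left hx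
  rw [mul_inv_rev, cs.inv_simple, cs.inv_simple] at this
  rw [← this]

lemma len3 (x y z : W) :
    cs.length (x * y * z) ≤ cs.length x + cs.length y + cs.length z := by
  calc cs.length (x * y * z) ≤ cs.length (x * y) + cs.length z := cs.length_mul_le _ _
    _ ≤ cs.length x + cs.length y + cs.length z := by
        have := cs.length_mul_le x y; omega

lemma len5 (x1 x2 x3 x4 x5 : W) :
    cs.length (x1*x2*x3*x4*x5) ≤ cs.length x1 + cs.length x2 + cs.length x3
      + cs.length x4 + cs.length x5 := by
  have h1 := cs.length_mul_le (x1*x2*x3*x4) x5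
  have h2 := cs.length_mul_le (x1*x2*x3) x4
  have h3 := cs.length_mul_le (x1*x2) x3
  have h4 := cs.length_mul_le x1 x2
  omega

lemma len9 (x1 x2 x3 x4 x5 x6 x7 x8 x9 : W) :
    cs.length (x1*x2*x3*x4*x5*x6*x7*x8*x9) ≤ cs.length x1 + cs.length x2 + cs.length x3
      + cs.length x4 + cs.length x5 + cs.length x6 + cs.length x7 + cs.length x8
      + cs.length x9 := by
  have h1 := cs.length_mul_le (x1*x2*x3*x4*x5*x6*x7*x8) x9
  have h2 := cs.length_mul_le (x1*x2*x3*x4*x5*x6*x7) x8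
  have h3 := cs.length_mul_le (x1*x2*x3*x4*x5*x6) x7
  have h4 := cs.length_mul_le (x1*x2*x3*x4*x5) x6
  have h5 := len5 cs x1 x2 x3 x4 x5
  omega

lemma genM_q0 (q : ℕ) (hq : 2 ≤ q) : genM 5 q 0 = 2 := by
  unfold genM
  rw [if_neg (by omega : ¬ (q = 0)), if_neg (by omega : ¬ (q + 1 = 0 ∨ 0 + 1 = q))]

lemma genM_q1 (q : ℕ) (hq : 2 ≤ q) : genM 5 q 1 = 2 ∨ genM 5 q 1 = 3 := by
  unfold genM
  rw [if_neg (by omega : ¬ (q = 1))]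
  by_cases h2 : q = 2
  · rw [if_pos (by omega : q + 1 = 1 ∨ 1 + 1 = q), if_neg (by omega : ¬ (q = 0 ∨ 1 = 0))]
    right; rfl
  · rw [if_neg (by omega : ¬ (q + 1 = 1 ∨ 1 + 1 = q))]
    left; rfl

lemma mainA (i0 i1 : Fin k) (hv0 : (i0 : ℕ) = 0) (hv1 : (i1 : ℕ) = 1) :
    ∀ c : ℕ, ∀ w w₁ w₂ w₃ w₄ w₅ : W,
    cs.length w₃ = c → FC cs w →
    w = w₁ * cs.simple i0 * w₂ * cs.simple i1 * w₃ * cs.simple i0 * w₄ * cs.simple i1 * w₅ →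
    cs.length w = cs.length w₁ + cs.length w₂ + cs.length w₃ + cs.length w₄
      + cs.length w₅ + 4 →
    w = w₁ * w₂ * (cs.simple i0 * cs.simple i1 * cs.simple i0) * w₃ * w₄ * cs.simple i1 * w₅ →
    w = w₁ * cs.simple i0 * w₂ * w₃ * (cs.simple i1 * cs.simple i0 * cs.simple i1) * w₄ * w₅ →
    w = w₁ * w₂ * w₃ * (cs.simple i0 * cs.simple i1 * cs.simple i0 * cs.simple i1) * w₄ * w₅ := by
  have hls : cs.length (cs.simple i0) = 1 := cs.length_simple i0
  have hlt : cs.length (cs.simple i1) = 1 := cs.length_simple i1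
  intro c
  induction c with
  | zero =>
    intro w w₁ w₂ w₃ w₄ w₅ hc hFC h1 h1r h2 h3
    have hw3 : w₃ = 1 := cs.length_eq_zero_iff.mp hc
    have L1 : w₁ * (cs.simple i0 * w₂) * (cs.simple i1 * (cs.simple i0 * (w₄ * (cs.simple i1 * w₅)))) = w := by
      rw [h1, hw3]; group
    have L2 : w₁ * (w₂ * cs.simple i0) * (cs.simple i1 * (cs.simple i0 * (w₄ * (cs.simple i1 * w₅)))) = w := by
      rw [h2, hw3]; group
    have scomm : cs.simple i0 * w₂ = w₂ * cs.simple i0 := mul_left_cancel (mul_right_cancel (L1.trans L2.symm))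
    calc w = w₁ * (cs.simple i0 * w₂) * (cs.simple i1 * (cs.simple i0 * (cs.simple i1 * (w₄ * w₅)))) := by rw [h3, hw3]; group
      _ = w₁ * (w₂ * cs.simple i0) * (cs.simple i1 * (cs.simple i0 * (cs.simple i1 * (w₄ * w₅)))) := by rw [scomm]
      _ = w₁ * w₂ * w₃ * (cs.simple i0 * cs.simple i1 * cs.simple i0 * cs.simple i1) * w₄ * w₅ := by rw [hw3]; group
  | succ c ih =>
    intro w w₁ w₂ w₃ w₄ w₅ hc hFC h1 h1r h2 h3
    have hw3ne : w₃ ≠ 1 := by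
      intro h; rw [h, cs.length_one] at hc; omega
    obtain ⟨q, hq⟩ := cs.exists_leftDescent_of_ne_one hw3ne
    have hqd : cs.length (cs.simple q * w₃) + 1 = cs.length w₃ := by
      have hq' : cs.length (cs.simple q * w₃) < cs.length w₃ := hq
      rcases cs.length_simple_mul w₃ q with h | h
      · omega
      · exact h
    have hw3eq : w₃ = cs.simple q * (cs.simple q * w₃) := (cs.simple_mul_simple_cancel_left q).symm
    have hlw3' : cs.length (cs.simple q * w₃) = c := by omega
    -- exclusion q ≠ i0 via h2
    have hsw3 : cs.length (cs.simple i0 * w₃) = cs.length w₃ + 1 := by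
      have e : w = (w₁ * w₂ * (cs.simple i0 * cs.simple i1)) * (cs.simple i0 * w₃) * (w₄ * (cs.simple i1 * w₅)) := by
        rw [h2]; group
      have u0 : cs.length w ≤ cs.length (w₁ * w₂ * (cs.simple i0 * cs.simple i1)) + cs.length (cs.simple i0 * w₃)
          + cs.length (w₄ * (cs.simple i1 * w₅)) := by
        rw [e]; exact len3 cs _ _ _
      have u1 : cs.length (w₁ * w₂ * (cs.simple i0 * cs.simple i1)) ≤ cs.length w₁ + cs.length w₂ + 2 := by
        have v1 := len3 cs w₁ w₂ (cs.simple i0 * cs.simple i1)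
        have v2 := cs.length_mul_le (cs.simple i0) (cs.simple i1)
        omega
      have u2 : cs.length (cs.simple i0 * w₃) ≤ 1 + cs.length w₃ := by
        have := cs.length_mul_le (cs.simple i0) w₃; omega
      have u3 : cs.length (w₄ * (cs.simple i1 * w₅)) ≤ cs.length w₄ + 1 + cs.length w₅ := by
        have v1 := cs.length_mul_le w₄ (cs.simple i1 * w₅)
        have v2 := cs.length_mul_le (cs.simple i1) w₅
        omega
      omega
    have hq0 : q ≠ i0 := by
      intro h
      rw [h] at hqd
      omega
    -- exclusion q ≠ i1 via h1
    have htw3 : cs.length (cs.simple i1 * w₃) = cs.length w₃ + 1 := by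
      have e : w = (w₁ * cs.simple i0 * w₂) * (cs.simple i1 * w₃) * (cs.simple i0 * (w₄ * (cs.simple i1 * w₅))) := by
        rw [h1]; group
      have u0 : cs.length w ≤ cs.length (w₁ * cs.simple i0 * w₂) + cs.length (cs.simple i1 * w₃)
          + cs.length (cs.simple i0 * (w₄ * (cs.simple i1 * w₅))) := by
        rw [e]; exact len3 cs _ _ _
      have u1 : cs.length (w₁ * cs.simple i0 * w₂) ≤ cs.length w₁ + 1 + cs.length w₂ := by
        have v1 := len3 cs w₁ (cs.simple i0) w₂
        omega
      have u2 : cs.length (cs.simple i1 * w₃) ≤ 1 + cs.length w₃ := by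
        have := cs.length_mul_le (cs.simple i1) w₃; omega
      have u3 : cs.length (cs.simple i0 * (w₄ * (cs.simple i1 * w₅))) ≤ 1 + (cs.length w₄ + 1 + cs.length w₅) := by
        have v1 := cs.length_mul_le (cs.simple i0) (w₄ * (cs.simple i1 * w₅))
        have v2 := cs.length_mul_le w₄ (cs.simple i1 * w₅)
        have v3 := cs.length_mul_le (cs.simple i1) w₅
        omega
      omega
    have hq1 : q ≠ i1 := by
      intro h
      rw [h] at hqd
      omega
    have hq2 : 2 ≤ (q : ℕ) := by
      have n0 : (q : ℕ) ≠ 0 := fun hh => hq0 (Fin.ext (by rw [hh, hv0]))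
      have n1 : (q : ℕ) ≠ 1 := fun hh => hq1 (Fin.ext (by rw [hh, hv1]))
      omega
    have hg0 : genM 5 (q : ℕ) (i0 : ℕ) = 2 := by
      rw [hv0]; exact genM_q0 q hq2
    have ssq : cs.simple i0 * cs.simple q = cs.simple q * cs.simple i0 := simple_comm cs i0 q (by rw [genM_symm]; exact hg0)
    have hg1 : genM 5 (q : ℕ) (i1 : ℕ) = 2 := by
      have halt : genM 5 (q : ℕ) (i1 : ℕ) = 2 ∨ genM 5 (q : ℕ) (i1 : ℕ) = 3 := by
        rw [hv1]; exact genM_q1 q hq2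
      rcases halt with h | h
      · exact h
      exfalso
      -- the element y = t w₃ s w₄ t = w₃ (tst) w₄ is FC with left descents i1 and q
      have hyfac : w = (w₁ * cs.simple i0 * w₂) * (cs.simple i1 * w₃ * cs.simple i0 * w₄ * cs.simple i1) * w₅ := by
        rw [h1]; group
      have hylen : cs.length (cs.simple i1 * w₃ * cs.simple i0 * w₄ * cs.simple i1) = cs.length w₃ + cs.length w₄ + 3
          ∧ cs.length w = cs.length (w₁ * cs.simple i0 * w₂) + cs.length (cs.simple i1 * w₃ * cs.simple i0 * w₄ * cs.simple i1)
            + cs.length w₅ := by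
        have u0 : cs.length w ≤ cs.length (w₁ * cs.simple i0 * w₂)
            + cs.length (cs.simple i1 * w₃ * cs.simple i0 * w₄ * cs.simple i1) + cs.length w₅ := by
          rw [hyfac]; exact len3 cs _ _ _
        have u1 : cs.length (w₁ * cs.simple i0 * w₂) ≤ cs.length w₁ + 1 + cs.length w₂ := by
          have := len3 cs w₁ (cs.simple i0) w₂; omega
        have u2 : cs.length (cs.simple i1 * w₃ * cs.simple i0 * w₄ * cs.simple i1)
            ≤ cs.length w₃ + cs.length w₄ + 3 := by
          have := len5 cs (cs.simple i1) w₃ (cs.simple i0) w₄ (cs.simple i1); omega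
        omega
      have hFCy : FC cs (cs.simple i1 * w₃ * cs.simple i0 * w₄ * cs.simple i1) :=
        FC_factor cs w _ _ _ hyfac hylen.2 hFC
      have hyw : (cs.simple i1 * w₃ * cs.simple i0 * w₄ * cs.simple i1) = w₃ * (cs.simple i1 * cs.simple i0 * cs.simple i1) * w₄ := by
        have A : (w₁ * cs.simple i0 * w₂) * (cs.simple i1 * w₃ * cs.simple i0 * w₄ * cs.simple i1) * w₅ = w := hyfac.symm
        have B : (w₁ * cs.simple i0 * w₂) * (w₃ * (cs.simple i1 * cs.simple i0 * cs.simple i1) * w₄) * w₅ = w := by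
          rw [h3]; group
        exact mul_left_cancel (mul_right_cancel (A.trans B.symm))
      have hty : cs.length (cs.simple i1 * (cs.simple i1 * w₃ * cs.simple i0 * w₄ * cs.simple i1)) + 1
          = cs.length (cs.simple i1 * w₃ * cs.simple i0 * w₄ * cs.simple i1) := by
        have e1 : cs.simple i1 * (cs.simple i1 * w₃ * cs.simple i0 * w₄ * cs.simple i1) = w₃ * cs.simple i0 * w₄ * cs.simple i1 := by
          calc cs.simple i1 * (cs.simple i1 * w₃ * cs.simple i0 * w₄ * cs.simple i1)
              = cs.simple i1 * (cs.simple i1 * (w₃ * cs.simple i0 * w₄ * cs.simple i1)) := by group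
            _ = w₃ * cs.simple i0 * w₄ * cs.simple i1 := cs.simple_mul_simple_cancel_left i1
        have u1 : cs.length (w₃ * cs.simple i0 * w₄ * cs.simple i1) ≤ cs.length w₃ + cs.length w₄ + 2 := by
          have v1 := cs.length_mul_le (w₃ * cs.simple i0 * w₄) (cs.simple i1)
          have v2 := len3 cs w₃ (cs.simple i0) w₄
          omega
        have u2 : cs.length (cs.simple i1 * w₃ * cs.simple i0 * w₄ * cs.simple i1)
            ≤ 1 + cs.length (cs.simple i1 * (cs.simple i1 * w₃ * cs.simple i0 * w₄ * cs.simple i1)) := by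
          have v1 := cs.length_mul_le (cs.simple i1) (cs.simple i1 * (cs.simple i1 * w₃ * cs.simple i0 * w₄ * cs.simple i1))
          rw [cs.simple_mul_simple_cancel_left i1] at v1
          omega
        rw [e1] at u2 ⊢
        omega
      have hqy : cs.length (cs.simple q * (cs.simple i1 * w₃ * cs.simple i0 * w₄ * cs.simple i1)) + 1
          = cs.length (cs.simple i1 * w₃ * cs.simple i0 * w₄ * cs.simple i1) := by
        have e1 : cs.simple q * (cs.simple i1 * w₃ * cs.simple i0 * w₄ * cs.simple i1)
            = (cs.simple q * w₃) * (cs.simple i1 * cs.simple i0 * cs.simple i1) * w₄ := by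
          calc cs.simple q * (cs.simple i1 * w₃ * cs.simple i0 * w₄ * cs.simple i1)
              = cs.simple q * (cs.simple q * ((cs.simple q * w₃) * ((cs.simple i1 * cs.simple i0 * cs.simple i1) * w₄))) := by
                rw [hyw]
                nth_rw 1 [hw3eq]
                group
            _ = (cs.simple q * w₃) * ((cs.simple i1 * cs.simple i0 * cs.simple i1) * w₄) := cs.simple_mul_simple_cancel_left q
            _ = (cs.simple q * w₃) * (cs.simple i1 * cs.simple i0 * cs.simple i1) * w₄ := by group
        have u1 : cs.length ((cs.simple q * w₃) * (cs.simple i1 * cs.simple i0 * cs.simple i1) * w₄)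
            ≤ c + 3 + cs.length w₄ := by
          have v1 := len3 cs (cs.simple q * w₃) (cs.simple i1 * cs.simple i0 * cs.simple i1) w₄
          have v2 := len3 cs (cs.simple i1) (cs.simple i0) (cs.simple i1)
          omega
        have u2 : cs.length (cs.simple i1 * w₃ * cs.simple i0 * w₄ * cs.simple i1)
            ≤ 1 + cs.length (cs.simple q * (cs.simple i1 * w₃ * cs.simple i0 * w₄ * cs.simple i1)) := by
          have v1 := cs.length_mul_le (cs.simple q) (cs.simple q * (cs.simple i1 * w₃ * cs.simple i0 * w₄ * cs.simple i1))
          rw [cs.simple_mul_simple_cancel_left q] at v1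
          have hlq : cs.length (cs.simple q) = 1 := cs.length_simple q
          omega
        rw [e1] at u2 ⊢
        omega
      exact twoDescentL cs (cs.simple i1 * w₃ * cs.simple i0 * w₄ * cs.simple i1) i1 q
        (by rw [hv1] at h; rw [genM_symm, hv1]; omega) hty hqy hFCy
    have tsq : cs.simple i1 * cs.simple q = cs.simple q * cs.simple i1 := simple_comm cs i1 q (by rw [genM_symm]; exact hg1)
    -- build the new data
    have h1' : w = w₁ * cs.simple i0 * (w₂ * cs.simple q) * cs.simple i1 * (cs.simple q * w₃) * cs.simple i0 * w₄ * cs.simple i1 * w₅ := by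
      calc w = (w₁ * cs.simple i0 * w₂) * (cs.simple i1 * cs.simple q) * ((cs.simple q * w₃) * (cs.simple i0 * (w₄ * (cs.simple i1 * w₅)))) := by
            nth_rw 1 [h1]
            nth_rw 1 [hw3eq]
            group
        _ = (w₁ * cs.simple i0 * w₂) * (cs.simple q * cs.simple i1) * ((cs.simple q * w₃) * (cs.simple i0 * (w₄ * (cs.simple i1 * w₅)))) := by
            rw [tsq]
        _ = w₁ * cs.simple i0 * (w₂ * cs.simple q) * cs.simple i1 * (cs.simple q * w₃) * cs.simple i0 * w₄ * cs.simple i1 * w₅ := by group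
    have hblock : (cs.simple i0 * cs.simple i1 * cs.simple i0) * cs.simple q = cs.simple q * (cs.simple i0 * cs.simple i1 * cs.simple i0) := by
      calc (cs.simple i0 * cs.simple i1 * cs.simple i0) * cs.simple q = (cs.simple i0 * cs.simple i1) * (cs.simple i0 * cs.simple q) := by group
        _ = (cs.simple i0 * cs.simple i1) * (cs.simple q * cs.simple i0) := by rw [ssq]
        _ = cs.simple i0 * (cs.simple i1 * cs.simple q) * cs.simple i0 := by group
        _ = cs.simple i0 * (cs.simple q * cs.simple i1) * cs.simple i0 := by rw [tsq]
        _ = (cs.simple i0 * cs.simple q) * (cs.simple i1 * cs.simple i0) := by group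
        _ = (cs.simple q * cs.simple i0) * (cs.simple i1 * cs.simple i0) := by rw [ssq]
        _ = cs.simple q * (cs.simple i0 * cs.simple i1 * cs.simple i0) := by group
    have h2' : w = w₁ * (w₂ * cs.simple q) * (cs.simple i0 * cs.simple i1 * cs.simple i0) * (cs.simple q * w₃) * w₄ * cs.simple i1 * w₅ := by
      calc w = (w₁ * w₂) * ((cs.simple i0 * cs.simple i1 * cs.simple i0) * cs.simple q) * ((cs.simple q * w₃) * (w₄ * (cs.simple i1 * w₅))) := by
            nth_rw 1 [h2]
            nth_rw 1 [hw3eq]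
            group
        _ = (w₁ * w₂) * (cs.simple q * (cs.simple i0 * cs.simple i1 * cs.simple i0)) * ((cs.simple q * w₃) * (w₄ * (cs.simple i1 * w₅))) := by
            rw [hblock]
        _ = w₁ * (w₂ * cs.simple q) * (cs.simple i0 * cs.simple i1 * cs.simple i0) * (cs.simple q * w₃) * w₄ * cs.simple i1 * w₅ := by group
    have h3' : w = w₁ * cs.simple i0 * (w₂ * cs.simple q) * (cs.simple q * w₃) * (cs.simple i1 * cs.simple i0 * cs.simple i1) * w₄ * w₅ := by
      nth_rw 1 [h3]
      nth_rw 1 [hw3eq]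
      group
    have h1r' : cs.length w = cs.length w₁ + cs.length (w₂ * cs.simple q) + cs.length (cs.simple q * w₃)
        + cs.length w₄ + cs.length w₅ + 4 := by
      have u0 : cs.length w ≤ cs.length w₁ + 1 + cs.length (w₂ * cs.simple q) + 1
          + cs.length (cs.simple q * w₃) + 1 + cs.length w₄ + 1 + cs.length w₅ := by
        have := len9 cs w₁ (cs.simple i0) (w₂ * cs.simple q) (cs.simple i1) (cs.simple q * w₃) (cs.simple i0) w₄ (cs.simple i1) w₅
        rw [← h1'] at this
        omega
      have u1 : cs.length (w₂ * cs.simple q) ≤ cs.length w₂ + 1 := by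
        have := cs.length_mul_le w₂ (cs.simple q); have := cs.length_simple q; omega
      omega
    have goal' := ih w w₁ (w₂ * cs.simple q) (cs.simple q * w₃) w₄ w₅ hlw3' hFC h1' h1r' h2' h3'
    calc w = w₁ * (w₂ * cs.simple q) * (cs.simple q * w₃) * (cs.simple i0 * cs.simple i1 * cs.simple i0 * cs.simple i1) * w₄ * w₅ := goal'
      _ = w₁ * w₂ * (cs.simple q * (cs.simple q * w₃)) * (cs.simple i0 * cs.simple i1 * cs.simple i0 * cs.simple i1) * w₄ * w₅ := by group
      _ = w₁ * w₂ * w₃ * (cs.simple i0 * cs.simple i1 * cs.simple i0 * cs.simple i1) * w₄ * w₅ := by rw [← hw3eq]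

lemma mainB (i0 i1 : Fin k) (hv0 : (i0 : ℕ) = 0) (hv1 : (i1 : ℕ) = 1) :
    ∀ c : ℕ, ∀ w w₁ w₂ w₃ w₄ w₅ : W,
    cs.length w₃ = c → FC cs w →
    w = w₁ * cs.simple i1 * w₂ * cs.simple i0 * w₃ * cs.simple i1 * w₄ * cs.simple i0 * w₅ →
    cs.length w = cs.length w₁ + cs.length w₂ + cs.length w₃ + cs.length w₄
      + cs.length w₅ + 4 →
    w = w₁ * w₂ * (cs.simple i1 * cs.simple i0 * cs.simple i1) * w₃ * w₄ * cs.simple i0 * w₅ →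
    w = w₁ * cs.simple i1 * w₂ * w₃ * (cs.simple i0 * cs.simple i1 * cs.simple i0) * w₄ * w₅ →
    w = w₁ * w₂ * w₃ * (cs.simple i1 * cs.simple i0 * cs.simple i1 * cs.simple i0) * w₄ * w₅ := by
  have hls : cs.length (cs.simple i1) = 1 := cs.length_simple i1
  have hlt : cs.length (cs.simple i0) = 1 := cs.length_simple i0
  intro c
  induction c with
  | zero =>
    intro w w₁ w₂ w₃ w₄ w₅ hc hFC h1 h1r h2 h3
    have hw3 : w₃ = 1 := cs.length_eq_zero_iff.mp hc
    have L1 : (w₁ * cs.simple i1 * w₂) * (cs.simple i0 * (cs.simple i1 * (w₄ * cs.simple i0))) * w₅ = w := by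
      rw [h1, hw3]; group
    have L3 : (w₁ * cs.simple i1 * w₂) * (cs.simple i0 * (cs.simple i1 * (cs.simple i0 * w₄))) * w₅ = w := by
      rw [h3, hw3]; group
    have E1 : cs.simple i0 * (cs.simple i1 * (w₄ * cs.simple i0)) = cs.simple i0 * (cs.simple i1 * (cs.simple i0 * w₄)) :=
      mul_left_cancel (mul_right_cancel (L1.trans L3.symm))
    have E2 : w₄ * cs.simple i0 = cs.simple i0 * w₄ := mul_left_cancel (mul_left_cancel E1)
    calc w = (w₁ * w₂ * (cs.simple i1 * cs.simple i0 * cs.simple i1)) * (w₄ * cs.simple i0) * w₅ := by rw [h2, hw3]; group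
      _ = (w₁ * w₂ * (cs.simple i1 * cs.simple i0 * cs.simple i1)) * (cs.simple i0 * w₄) * w₅ := by rw [E2]
      _ = w₁ * w₂ * w₃ * (cs.simple i1 * cs.simple i0 * cs.simple i1 * cs.simple i0) * w₄ * w₅ := by rw [hw3]; group
  | succ c ih =>
    intro w w₁ w₂ w₃ w₄ w₅ hc hFC h1 h1r h2 h3
    have hw3ne : w₃ ≠ 1 := by
      intro h; rw [h, cs.length_one] at hc; omega
    obtain ⟨q, hq⟩ := cs.exists_rightDescent_of_ne_one hw3ne
    have hqd : cs.length (w₃ * cs.simple q) + 1 = cs.length w₃ := by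
      have hq' : cs.length (w₃ * cs.simple q) < cs.length w₃ := hq
      rcases cs.length_mul_simple w₃ q with h | h
      · omega
      · exact h
    have hw3eq : w₃ = w₃ * cs.simple q * cs.simple q := (cs.simple_mul_simple_cancel_right q).symm
    have hlw3' : cs.length (w₃ * cs.simple q) = c := by omega
    -- exclusion q ≠ i1 via h1 (w₃ ⬝ s adjacent)
    have hsw3 : cs.length (w₃ * cs.simple i1) = cs.length w₃ + 1 := by
      have e : w = (w₁ * (cs.simple i1 * (w₂ * cs.simple i0))) * (w₃ * cs.simple i1) * (w₄ * (cs.simple i0 * w₅)) := by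
        rw [h1]; group
      have u0 : cs.length w ≤ cs.length (w₁ * (cs.simple i1 * (w₂ * cs.simple i0))) + cs.length (w₃ * cs.simple i1)
          + cs.length (w₄ * (cs.simple i0 * w₅)) := by
        rw [e]; exact len3 cs _ _ _
      have u1 : cs.length (w₁ * (cs.simple i1 * (w₂ * cs.simple i0))) ≤ cs.length w₁ + cs.length w₂ + 2 := by
        have v1 := cs.length_mul_le w₁ (cs.simple i1 * (w₂ * cs.simple i0))
        have v2 := cs.length_mul_le (cs.simple i1) (w₂ * cs.simple i0)
        have v3 := cs.length_mul_le w₂ (cs.simple i0)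
        omega
      have u2 : cs.length (w₃ * cs.simple i1) ≤ cs.length w₃ + 1 := by
        have := cs.length_mul_le w₃ (cs.simple i1); omega
      have u3 : cs.length (w₄ * (cs.simple i0 * w₅)) ≤ cs.length w₄ + 1 + cs.length w₅ := by
        have v1 := cs.length_mul_le w₄ (cs.simple i0 * w₅)
        have v2 := cs.length_mul_le (cs.simple i0) w₅
        omega
      omega
    have hq1 : q ≠ i1 := by
      intro h
      rw [h] at hqd
      omega
    -- exclusion q ≠ i0 via h3 (w₃ ⬝ t adjacent)
    have htw3 : cs.length (w₃ * cs.simple i0) = cs.length w₃ + 1 := by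
      have e : w = (w₁ * (cs.simple i1 * w₂)) * (w₃ * cs.simple i0) * (cs.simple i1 * (cs.simple i0 * (w₄ * w₅))) := by
        rw [h3]; group
      have u0 : cs.length w ≤ cs.length (w₁ * (cs.simple i1 * w₂)) + cs.length (w₃ * cs.simple i0)
          + cs.length (cs.simple i1 * (cs.simple i0 * (w₄ * w₅))) := by
        rw [e]; exact len3 cs _ _ _
      have u1 : cs.length (w₁ * (cs.simple i1 * w₂)) ≤ cs.length w₁ + 1 + cs.length w₂ := by
        have v1 := cs.length_mul_le w₁ (cs.simple i1 * w₂)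
        have v2 := cs.length_mul_le (cs.simple i1) w₂
        omega
      have u2 : cs.length (w₃ * cs.simple i0) ≤ cs.length w₃ + 1 := by
        have := cs.length_mul_le w₃ (cs.simple i0); omega
      have u3 : cs.length (cs.simple i1 * (cs.simple i0 * (w₄ * w₅)))
          ≤ 1 + (1 + (cs.length w₄ + cs.length w₅)) := by
        have v1 := cs.length_mul_le (cs.simple i1) (cs.simple i0 * (w₄ * w₅))
        have v2 := cs.length_mul_le (cs.simple i0) (w₄ * w₅)
        have v3 := cs.length_mul_le w₄ w₅
        omega
      omega
    have hq0 : q ≠ i0 := by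
      intro h
      rw [h] at hqd
      omega
    have hq2 : 2 ≤ (q : ℕ) := by
      have n0 : (q : ℕ) ≠ 0 := fun hh => hq0 (Fin.ext (by rw [hh, hv0]))
      have n1 : (q : ℕ) ≠ 1 := fun hh => hq1 (Fin.ext (by rw [hh, hv1]))
      omega
    have hg0 : genM 5 (q : ℕ) (i0 : ℕ) = 2 := by
      rw [hv0]; exact genM_q0 q hq2
    have tcq : cs.simple i0 * cs.simple q = cs.simple q * cs.simple i0 := simple_comm cs i0 q (by rw [genM_symm]; exact hg0)
    have hg1 : genM 5 (q : ℕ) (i1 : ℕ) = 2 := by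
      have halt : genM 5 (q : ℕ) (i1 : ℕ) = 2 ∨ genM 5 (q : ℕ) (i1 : ℕ) = 3 := by
        rw [hv1]; exact genM_q1 q hq2
      rcases halt with h | h
      · exact h
      exfalso
      -- the element x = s w₂ t w₃ s = w₂ (sts) w₃ is FC with right descents i1 and q
      have hxfac : w = w₁ * (cs.simple i1 * w₂ * cs.simple i0 * w₃ * cs.simple i1) * (w₄ * (cs.simple i0 * w₅)) := by
        rw [h1]; group
      have hxlen : cs.length (cs.simple i1 * w₂ * cs.simple i0 * w₃ * cs.simple i1) = cs.length w₂ + cs.length w₃ + 3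
          ∧ cs.length w = cs.length w₁ + cs.length (cs.simple i1 * w₂ * cs.simple i0 * w₃ * cs.simple i1)
            + cs.length (w₄ * (cs.simple i0 * w₅)) := by
        have u0 : cs.length w ≤ cs.length w₁ + cs.length (cs.simple i1 * w₂ * cs.simple i0 * w₃ * cs.simple i1)
            + cs.length (w₄ * (cs.simple i0 * w₅)) := by
          rw [hxfac]; exact len3 cs _ _ _
        have u1 : cs.length (cs.simple i1 * w₂ * cs.simple i0 * w₃ * cs.simple i1)
            ≤ cs.length w₂ + cs.length w₃ + 3 := by
          have := len5 cs (cs.simple i1) w₂ (cs.simple i0) w₃ (cs.simple i1); omega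
        have u2 : cs.length (w₄ * (cs.simple i0 * w₅)) ≤ cs.length w₄ + 1 + cs.length w₅ := by
          have v1 := cs.length_mul_le w₄ (cs.simple i0 * w₅)
          have v2 := cs.length_mul_le (cs.simple i0) w₅
          omega
        omega
      have hFCx : FC cs (cs.simple i1 * w₂ * cs.simple i0 * w₃ * cs.simple i1) :=
        FC_factor cs w _ _ _ hxfac hxlen.2 hFC
      have hxw : (cs.simple i1 * w₂ * cs.simple i0 * w₃ * cs.simple i1) = w₂ * (cs.simple i1 * cs.simple i0 * cs.simple i1) * w₃ := by
        have A : w₁ * (cs.simple i1 * w₂ * cs.simple i0 * w₃ * cs.simple i1) * (w₄ * (cs.simple i0 * w₅)) = w := hxfac.symm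
        have B : w₁ * (w₂ * (cs.simple i1 * cs.simple i0 * cs.simple i1) * w₃) * (w₄ * (cs.simple i0 * w₅)) = w := by
          rw [h2]; group
        exact mul_left_cancel (mul_right_cancel (A.trans B.symm))
      have hsx : cs.length ((cs.simple i1 * w₂ * cs.simple i0 * w₃ * cs.simple i1) * cs.simple i1) + 1
          = cs.length (cs.simple i1 * w₂ * cs.simple i0 * w₃ * cs.simple i1) := by
        have e1 : (cs.simple i1 * w₂ * cs.simple i0 * w₃ * cs.simple i1) * cs.simple i1 = cs.simple i1 * w₂ * cs.simple i0 * w₃ :=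
          cs.simple_mul_simple_cancel_right i1
        have u1 : cs.length (cs.simple i1 * w₂ * cs.simple i0 * w₃)
            ≤ cs.length w₂ + cs.length w₃ + 2 := by
          have v1 := len3 cs (cs.simple i1 * w₂) (cs.simple i0) w₃
          have v2 := cs.length_mul_le (cs.simple i1) w₂
          omega
        have u2 : cs.length (cs.simple i1 * w₂ * cs.simple i0 * w₃ * cs.simple i1)
            ≤ cs.length ((cs.simple i1 * w₂ * cs.simple i0 * w₃ * cs.simple i1) * cs.simple i1) + 1 := by
          have v1 := cs.length_mul_le ((cs.simple i1 * w₂ * cs.simple i0 * w₃ * cs.simple i1) * cs.simple i1) (cs.simple i1)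
          rw [cs.simple_mul_simple_cancel_right i1] at v1
          omega
        rw [e1] at u2 ⊢
        omega
      have hqx : cs.length ((cs.simple i1 * w₂ * cs.simple i0 * w₃ * cs.simple i1) * cs.simple q) + 1
          = cs.length (cs.simple i1 * w₂ * cs.simple i0 * w₃ * cs.simple i1) := by
        have e1 : (cs.simple i1 * w₂ * cs.simple i0 * w₃ * cs.simple i1) * cs.simple q
            = (w₂ * (cs.simple i1 * cs.simple i0 * cs.simple i1)) * (w₃ * cs.simple q) := by
          rw [hxw]; group
        have u1 : cs.length ((w₂ * (cs.simple i1 * cs.simple i0 * cs.simple i1)) * (w₃ * cs.simple q))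
            ≤ cs.length w₂ + 3 + c := by
          have v1 := cs.length_mul_le (w₂ * (cs.simple i1 * cs.simple i0 * cs.simple i1)) (w₃ * cs.simple q)
          have v2 := cs.length_mul_le w₂ (cs.simple i1 * cs.simple i0 * cs.simple i1)
          have v3 := len3 cs (cs.simple i1) (cs.simple i0) (cs.simple i1)
          omega
        have u2 : cs.length (cs.simple i1 * w₂ * cs.simple i0 * w₃ * cs.simple i1)
            ≤ cs.length ((cs.simple i1 * w₂ * cs.simple i0 * w₃ * cs.simple i1) * cs.simple q) + 1 := by
          have v1 := cs.length_mul_le ((cs.simple i1 * w₂ * cs.simple i0 * w₃ * cs.simple i1) * cs.simple q) (cs.simple q)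
          rw [cs.simple_mul_simple_cancel_right q] at v1
          have hlq : cs.length (cs.simple q) = 1 := cs.length_simple q
          omega
        rw [e1] at u2 ⊢
        omega
      exact twoDescentR cs (cs.simple i1 * w₂ * cs.simple i0 * w₃ * cs.simple i1) i1 q
        (by rw [hv1] at h; rw [genM_symm, hv1]; omega) hsx hqx hFCx
    have scq : cs.simple i1 * cs.simple q = cs.simple q * cs.simple i1 := simple_comm cs i1 q (by rw [genM_symm]; exact hg1)
    -- build the new data
    have h1' : w = w₁ * cs.simple i1 * w₂ * cs.simple i0 * (w₃ * cs.simple q) * cs.simple i1 * (cs.simple q * w₄) * cs.simple i0 * w₅ := by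
      calc w = (w₁ * cs.simple i1 * w₂ * cs.simple i0) * ((w₃ * cs.simple q) * (cs.simple q * cs.simple i1)) * (w₄ * (cs.simple i0 * w₅)) := by
            nth_rw 1 [h1]
            nth_rw 1 [hw3eq]
            group
        _ = (w₁ * cs.simple i1 * w₂ * cs.simple i0) * ((w₃ * cs.simple q) * (cs.simple i1 * cs.simple q)) * (w₄ * (cs.simple i0 * w₅)) := by
            rw [scq]
        _ = w₁ * cs.simple i1 * w₂ * cs.simple i0 * (w₃ * cs.simple q) * cs.simple i1 * (cs.simple q * w₄) * cs.simple i0 * w₅ := by group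
    have h2' : w = w₁ * w₂ * (cs.simple i1 * cs.simple i0 * cs.simple i1) * (w₃ * cs.simple q) * (cs.simple q * w₄) * cs.simple i0 * w₅ := by
      nth_rw 1 [h2]
      nth_rw 1 [hw3eq]
      group
    have hblock : cs.simple q * (cs.simple i0 * cs.simple i1 * cs.simple i0) = (cs.simple i0 * cs.simple i1 * cs.simple i0) * cs.simple q := by
      calc cs.simple q * (cs.simple i0 * cs.simple i1 * cs.simple i0) = (cs.simple q * cs.simple i0) * (cs.simple i1 * cs.simple i0) := by group
        _ = (cs.simple i0 * cs.simple q) * (cs.simple i1 * cs.simple i0) := by rw [tcq]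
        _ = cs.simple i0 * ((cs.simple q * cs.simple i1) * cs.simple i0) := by group
        _ = cs.simple i0 * ((cs.simple i1 * cs.simple q) * cs.simple i0) := by rw [scq]
        _ = (cs.simple i0 * cs.simple i1) * (cs.simple q * cs.simple i0) := by group
        _ = (cs.simple i0 * cs.simple i1) * (cs.simple i0 * cs.simple q) := by rw [tcq]
        _ = (cs.simple i0 * cs.simple i1 * cs.simple i0) * cs.simple q := by group
    have h3' : w = w₁ * cs.simple i1 * w₂ * (w₃ * cs.simple q) * (cs.simple i0 * cs.simple i1 * cs.simple i0) * (cs.simple q * w₄) * w₅ := by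
      calc w = (w₁ * cs.simple i1 * w₂) * ((w₃ * cs.simple q) * (cs.simple q * (cs.simple i0 * cs.simple i1 * cs.simple i0))) * (w₄ * w₅) := by
            nth_rw 1 [h3]
            nth_rw 1 [hw3eq]
            group
        _ = (w₁ * cs.simple i1 * w₂) * ((w₃ * cs.simple q) * ((cs.simple i0 * cs.simple i1 * cs.simple i0) * cs.simple q)) * (w₄ * w₅) := by
            rw [hblock]
        _ = w₁ * cs.simple i1 * w₂ * (w₃ * cs.simple q) * (cs.simple i0 * cs.simple i1 * cs.simple i0) * (cs.simple q * w₄) * w₅ := by group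
    have h1r' : cs.length w = cs.length w₁ + cs.length w₂ + cs.length (w₃ * cs.simple q)
        + cs.length (cs.simple q * w₄) + cs.length w₅ + 4 := by
      have u0 : cs.length w ≤ cs.length w₁ + 1 + cs.length w₂ + 1
          + cs.length (w₃ * cs.simple q) + 1 + cs.length (cs.simple q * w₄) + 1 + cs.length w₅ := by
        have := len9 cs w₁ (cs.simple i1) w₂ (cs.simple i0) (w₃ * cs.simple q) (cs.simple i1) (cs.simple q * w₄) (cs.simple i0) w₅
        rw [← h1'] at this
        omega
      have u1 : cs.length (cs.simple q * w₄) ≤ 1 + cs.length w₄ := by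
        have := cs.length_mul_le (cs.simple q) w₄; have := cs.length_simple q; omega
      omega
    have goal' := ih w w₁ w₂ (w₃ * cs.simple q) (cs.simple q * w₄) w₅ hlw3' hFC h1' h1r' h2' h3'
    have hblock2 : cs.simple q * (cs.simple i1 * cs.simple i0 * cs.simple i1 * cs.simple i0) = (cs.simple i1 * cs.simple i0 * cs.simple i1 * cs.simple i0) * cs.simple q := by
      calc cs.simple q * (cs.simple i1 * cs.simple i0 * cs.simple i1 * cs.simple i0) = (cs.simple q * cs.simple i1) * (cs.simple i0 * cs.simple i1 * cs.simple i0) := by group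
        _ = (cs.simple i1 * cs.simple q) * (cs.simple i0 * cs.simple i1 * cs.simple i0) := by rw [← scq]
        _ = cs.simple i1 * (cs.simple q * (cs.simple i0 * cs.simple i1 * cs.simple i0)) := by group
        _ = cs.simple i1 * ((cs.simple i0 * cs.simple i1 * cs.simple i0) * cs.simple q) := by rw [hblock]
        _ = (cs.simple i1 * cs.simple i0 * cs.simple i1 * cs.simple i0) * cs.simple q := by group
    calc w = w₁ * w₂ * (w₃ * cs.simple q) * ((cs.simple i1 * cs.simple i0 * cs.simple i1 * cs.simple i0) * cs.simple q) * w₄ * w₅ := by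
          nth_rw 1 [goal']
          group
      _ = w₁ * w₂ * (w₃ * cs.simple q) * (cs.simple q * (cs.simple i1 * cs.simple i0 * cs.simple i1 * cs.simple i0)) * w₄ * w₅ := by
          rw [hblock2]
      _ = w₁ * w₂ * (w₃ * cs.simple q * cs.simple q) * (cs.simple i1 * cs.simple i0 * cs.simple i1 * cs.simple i0) * w₄ * w₅ := by group
      _ = w₁ * w₂ * w₃ * (cs.simple i1 * cs.simple i0 * cs.simple i1 * cs.simple i0) * w₄ * w₅ := by rw [← hw3eq]

lemma bridgeA (i0 i1 : Fin k) (hv0 : (i0 : ℕ) = 0) (hv1 : (i1 : ℕ) = 1)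
    (w : W) (hw : FC cs w) (s t : W)
    (hs : s = cs.simple i0) (ht : t = cs.simple i1)
    (w₁ w₂ w₃ w₄ w₅ : W)
    (h1 : w = w₁ * s * w₂ * t * w₃ * s * w₄ * t * w₅)
    (h1r : cs.length w = cs.length w₁ + cs.length s + cs.length w₂ + cs.length t +
      cs.length w₃ + cs.length s + cs.length w₄ + cs.length t + cs.length w₅)
    (h2 : w = w₁ * w₂ * (s * t * s) * w₃ * w₄ * t * w₅)
    (h3 : w = w₁ * s * w₂ * w₃ * (t * s * t) * w₄ * w₅) :
    w = w₁ * w₂ * w₃ * (s * t * s * t) * w₄ * w₅ ∧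
    cs.length w = cs.length w₁ + cs.length w₂ + cs.length w₃ +
      cs.length (s * t * s * t) + cs.length w₄ + cs.length w₅ := by
  subst hs; subst ht
  have hls := cs.length_simple i0
  have hlt := cs.length_simple i1
  have h1rn : cs.length w = cs.length w₁ + cs.length w₂ + cs.length w₃ + cs.length w₄
      + cs.length w₅ + 4 := by omega
  have main := mainA cs i0 i1 hv0 hv1 (cs.length w₃) w w₁ w₂ w₃ w₄ w₅ rfl hw h1 h1rn h2 h3
  refine ⟨main, ?_⟩
  have u1 := cs.length_mul_le (w₁ * w₂ * w₃ * (cs.simple i0 * cs.simple i1 * cs.simple i0 * cs.simple i1) * w₄) w₅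
  have u2 := cs.length_mul_le (w₁ * w₂ * w₃ * (cs.simple i0 * cs.simple i1 * cs.simple i0 * cs.simple i1)) w₄
  have u3 := cs.length_mul_le (w₁ * w₂ * w₃) (cs.simple i0 * cs.simple i1 * cs.simple i0 * cs.simple i1)
  have u4 := len3 cs w₁ w₂ w₃
  have u5 := len3 cs (cs.simple i0 * cs.simple i1) (cs.simple i0) (cs.simple i1)
  have u6 := cs.length_mul_le (cs.simple i0) (cs.simple i1)
  rw [← main] at u1
  omega

lemma bridgeB (i0 i1 : Fin k) (hv0 : (i0 : ℕ) = 0) (hv1 : (i1 : ℕ) = 1)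
    (w : W) (hw : FC cs w) (s t : W)
    (hs : s = cs.simple i1) (ht : t = cs.simple i0)
    (w₁ w₂ w₃ w₄ w₅ : W)
    (h1 : w = w₁ * s * w₂ * t * w₃ * s * w₄ * t * w₅)
    (h1r : cs.length w = cs.length w₁ + cs.length s + cs.length w₂ + cs.length t +
      cs.length w₃ + cs.length s + cs.length w₄ + cs.length t + cs.length w₅)
    (h2 : w = w₁ * w₂ * (s * t * s) * w₃ * w₄ * t * w₅)
    (h3 : w = w₁ * s * w₂ * w₃ * (t * s * t) * w₄ * w₅) :
    w = w₁ * w₂ * w₃ * (s * t * s * t) * w₄ * w₅ ∧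
    cs.length w = cs.length w₁ + cs.length w₂ + cs.length w₃ +
      cs.length (s * t * s * t) + cs.length w₄ + cs.length w₅ := by
  subst hs; subst ht
  have hls := cs.length_simple i0
  have hlt := cs.length_simple i1
  have h1rn : cs.length w = cs.length w₁ + cs.length w₂ + cs.length w₃ + cs.length w₄
      + cs.length w₅ + 4 := by omega
  have main := mainB cs i0 i1 hv0 hv1 (cs.length w₃) w w₁ w₂ w₃ w₄ w₅ rfl hw h1 h1rn h2 h3
  refine ⟨main, ?_⟩
  have u1 := cs.length_mul_le (w₁ * w₂ * w₃ * (cs.simple i1 * cs.simple i0 * cs.simple i1 * cs.simple i0) * w₄) w₅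
  have u2 := cs.length_mul_le (w₁ * w₂ * w₃ * (cs.simple i1 * cs.simple i0 * cs.simple i1 * cs.simple i0)) w₄
  have u3 := cs.length_mul_le (w₁ * w₂ * w₃) (cs.simple i1 * cs.simple i0 * cs.simple i1 * cs.simple i0)
  have u4 := len3 cs w₁ w₂ w₃
  have u5 := len3 cs (cs.simple i1 * cs.simple i0) (cs.simple i1) (cs.simple i0)
  have u6 := cs.length_mul_le (cs.simple i1) (cs.simple i0)
  rw [← main] at u1
  omega

end CoxDevel

/-- Lemma 3.2.2(i). -/
theorem stmt_1 (n : ℕ) (hn : 3 ≤ n) (W : Type) [Group W]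
    (cs : CoxeterSystem (Hmat (n-1)) W) (w : W) (hw : FC cs w)
    (s t : W)
    (hst : (s = cs.simple ⟨0, by omega⟩ ∧ t = cs.simple ⟨1, by omega⟩) ∨
           (s = cs.simple ⟨1, by omega⟩ ∧ t = cs.simple ⟨0, by omega⟩))
    (w₁ w₂ w₃ w₄ w₅ : W)
    (h1 : w = w₁ * s * w₂ * t * w₃ * s * w₄ * t * w₅)
    (h1r : cs.length w = cs.length w₁ + cs.length s + cs.length w₂ + cs.length t +
      cs.length w₃ + cs.length s + cs.length w₄ + cs.length t + cs.length w₅)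
    (h2 : w = w₁ * w₂ * (s * t * s) * w₃ * w₄ * t * w₅)
    (h2r : cs.length w = cs.length w₁ + cs.length w₂ + cs.length (s * t * s) +
      cs.length w₃ + cs.length w₄ + cs.length t + cs.length w₅)
    (h3 : w = w₁ * s * w₂ * w₃ * (t * s * t) * w₄ * w₅)
    (h3r : cs.length w = cs.length w₁ + cs.length s + cs.length w₂ + cs.length w₃ +
      cs.length (t * s * t) + cs.length w₄ + cs.length w₅) :
    w = w₁ * w₂ * w₃ * (s * t * s * t) * w₄ * w₅ ∧
    cs.length w = cs.length w₁ + cs.length w₂ + cs.length w₃ +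
      cs.length (s * t * s * t) + cs.length w₄ + cs.length w₅ := by
  rcases hst with ⟨hs, ht⟩ | ⟨hs, ht⟩
  · exact bridgeA cs ⟨0, by omega⟩ ⟨1, by omega⟩ rfl rfl w hw s t hs ht
      w₁ w₂ w₃ w₄ w₅ h1 h1r h2 h3
  · exact bridgeB cs ⟨0, by omega⟩ ⟨1, by omega⟩ rfl rfl w hw s t hs ht
      w₁ w₂ w₃ w₄ w₅ h1 h1r h2 h3
end
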